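/- arXiv:1204.4547 — 4 statements merged into one kernel-verified Lean document; each statement's English description precedes it below -/
import Mathlib

section
/- For any n ≥ 2 and any partition [n] = D ⊔ U with 1, n ∈ D, and for any real values w_δ and z_{[n]}, the Minkowski coefficient of I = [n] satisfies y_{[n]} = (−1)^{|[n] ∖ R_{δ_1}|} · ( z_{R_{δ_1}} − z_{R_{δ_2}} − z_{R_{δ_3}} + z_{R_{δ_4}} ), where δ_1 = {0, n+1}, δ_2 = {0, n}, δ_3 = {1, n+1}, δ_4 = {1, n}, and R and z are extended to non-proper diagonals as described. -/
open Finset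

attribute [local instance] Classical.propDecidable

namespace AssocPaper

/-- `x` and `y` are consecutive elements of the finite set `S`. -/
def ConsecIn (S : Finset ℕ) (x y : ℕ) : Prop :=
  x ∈ S ∧ y ∈ S ∧ x < y ∧ ∀ z ∈ S, ¬ (x < z ∧ z < y)

/-- `D̄ = D ∪ {0, n+1}`. -/
def Dbar (n : ℕ) (D : Finset ℕ) : Finset ℕ := insert 0 (insert (n + 1) D)

/-- The boundary edges of the `c`-labeled `(n+2)`-gon, given by endpoints `x < y`:
pairs of consecutive elements of `D̄`; if `U ≠ ∅` also `{0, min U}`, `{max U, n+1}` and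
pairs of consecutive elements of `U`; if `U = ∅` also `{0, n+1}`. -/
def IsBoundary (n : ℕ) (D U : Finset ℕ) (x y : ℕ) : Prop :=
  ConsecIn (Dbar n D) x y
    ∨ (U.Nonempty ∧
        ((x = 0 ∧ y ∈ U ∧ ∀ u ∈ U, y ≤ u)
          ∨ (y = n + 1 ∧ x ∈ U ∧ ∀ u ∈ U, u ≤ x)
          ∨ ConsecIn U x y))
    ∨ (U = ∅ ∧ x = 0 ∧ y = n + 1)

/-- `{x, y}` (with `x < y ≤ n+1`) is a proper diagonal: a diagonal of the
`(n+2)`-gon which is not a boundary edge. -/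
def IsProper (n : ℕ) (D U : Finset ℕ) (x y : ℕ) : Prop :=
  x < y ∧ y ≤ n + 1 ∧ ¬ IsBoundary n D U x y

/-- The set `R_δ` for a proper diagonal `δ = {x,y}` with `x < y`. -/
noncomputable def Rdiag (n : ℕ) (D U : Finset ℕ) (x y : ℕ) : Finset ℕ :=
  if x ∈ U then
    (if y ∈ U then (D ∪ U.filter fun u => u ≤ x) ∪ U.filter fun u => y ≤ u
     else D.filter (fun d => d < y) ∪ U.filter fun u => u ≤ x)
  else
    (if y ∈ U then D.filter (fun d => x < d) ∪ U.filter fun u => y ≤ u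
     else D.filter fun d => x < d ∧ d < y)

/-- The extension of `R` to non-proper and degenerate diagonals `δ = {x,y}`, `x ≤ y`:
`R_δ = [n]` if `U = ∅` and `δ = {0,n+1}`; for other non-proper or degenerate `δ`,
`R_δ = ∅` if `x,y ∈ D̄` and `R_δ = [n]` otherwise. -/
noncomputable def Rext (n : ℕ) (D U : Finset ℕ) (x y : ℕ) : Finset ℕ :=
  if IsProper n D U x y then Rdiag n D U x y
  else if U = ∅ ∧ x = 0 ∧ y = n + 1 then Finset.Icc 1 n
  else if x ∈ U ∨ y ∈ U then Finset.Icc 1 n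
  else ∅

/-- The extension of the right-hand sides `z_{R_δ}` to non-proper and degenerate
diagonals, given the values `w` on proper diagonals and the value `zn = z_{[n]}`. -/
noncomputable def zext (n : ℕ) (D U : Finset ℕ) (w : ℕ × ℕ → ℝ) (zn : ℝ) (x y : ℕ) : ℝ :=
  if IsProper n D U x y then w (x, y)
  else if U = ∅ ∧ x = 0 ∧ y = n + 1 then zn
  else if x ∈ U ∨ y ∈ U then zn
  else 0

/-- `a(I)`: the largest element of `D ∪ {0}` smaller than `min I`. -/
noncomputable def aI (D I : Finset ℕ) : ℕ :=
  ((insert 0 D).filter fun e => ∀ i ∈ I, e < i).sup id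

/-- `b(I)`: the smallest element of `D ∪ {n+1}` larger than `max I`. -/
noncomputable def bI (n : ℕ) (D I : Finset ℕ) : ℕ :=
  sInf {e : ℕ | e ∈ insert (n + 1) D ∧ ∀ i ∈ I, i < e}

/-- The minimum element `γ` of `I` (junk value for `I = ∅`). -/
noncomputable def minEl (I : Finset ℕ) : ℕ := sInf {i : ℕ | i ∈ I}

/-- The maximum element `Γ` of `I` (junk value `0` for `I = ∅`). -/
noncomputable def maxEl (I : Finset ℕ) : ℕ := I.sup id

/-- A nonempty `I ⊆ [n]` is nested if every `d ∈ D` with `a(I) < d < b(I)` lies in `I`. -/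
def IsNested (n : ℕ) (D I : Finset ℕ) : Prop :=
  I.Nonempty ∧ I ⊆ Finset.Icc 1 n ∧
    ∀ d ∈ D, aI D I < d → d < bI n D I → d ∈ I

/-- The nested components of `I`: the inclusion-maximal nested subsets of `I`. -/
noncomputable def nestedComponents (n : ℕ) (D I : Finset ℕ) : Finset (Finset ℕ) :=
  I.powerset.filter fun J =>
    IsNested n D J ∧ ∀ K ∈ I.powerset, IsNested n D K → J ⊆ K → J = K

/-- `v(I)`: the number of nested components of `I`. -/
noncomputable def vI (n : ℕ) (D I : Finset ℕ) : ℕ := (nestedComponents n D I).card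

/-- `x` is the last element of one of the up intervals of `J`
(an element of `J ∩ U` whose successor in `U`, if any, is not in `J`). -/
def IsRunEnd (U J : Finset ℕ) (x : ℕ) : Prop :=
  x ∈ J ∧ x ∈ U ∧ ∀ y, ConsecIn U x y → y ∉ J

/-- `y` is the first element of one of the up intervals of `J`
(an element of `J ∩ U` whose predecessor in `U`, if any, is not in `J`). -/
def IsRunStart (U J : Finset ℕ) (y : ℕ) : Prop :=
  y ∈ J ∧ y ∈ U ∧ ∀ x, ConsecIn U x y → x ∉ J

/-- `{x,y}` is one of the diagonals `δ_1(J), …, δ_{w+1}(J)` associated to a nested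
set `J` with `a = a(J)`, `b = b(J)` and up intervals `[α_1,β_1]_U, …, [α_w,β_w]_U`,
namely `{a,α_1}, {β_1,α_2}, …, {β_w,b}` (and `{a,b}` when `w = 0`). -/
def AssocDiag (n : ℕ) (D U J : Finset ℕ) (x y : ℕ) : Prop :=
  x < y ∧ (x = aI D J ∨ IsRunEnd U J x) ∧ (y = bI n D J ∨ IsRunStart U J y) ∧
    ∀ u ∈ J ∩ U, ¬ (x < u ∧ u < y)

/-- `W(J)`: the proper diagonals among the diagonals associated to the nested set `J`. -/
noncomputable def WJ (n : ℕ) (D U J : Finset ℕ) : Finset (ℕ × ℕ) :=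
  (Finset.range (n + 2) ×ˢ Finset.range (n + 2)).filter fun p =>
    AssocDiag n D U J p.1 p.2 ∧ IsProper n D U p.1 p.2

/-- The tight value `z^c_I = ∑_i ( ∑_{j ∈ W(J_i)} w_{δ_j(J_i)} − (|W(J_i)|−1)·z_{[n]} )`,
the sum running over the nested components `J_i` of `I` (so `z^c_∅ = 0`). -/
noncomputable def zc (n : ℕ) (D U : Finset ℕ) (w : ℕ × ℕ → ℝ) (zn : ℝ) (I : Finset ℕ) : ℝ :=
  ∑ J ∈ nestedComponents n D I,
    ((∑ p ∈ WJ n D U J, w p) - (((WJ n D U J).card : ℝ) - 1) * zn)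

/-- The Minkowski coefficient `y_I = ∑_{J ⊆ I} (−1)^{|I∖J|} z^c_J`. -/
noncomputable def yI (n : ℕ) (D U : Finset ℕ) (w : ℕ × ℕ → ℝ) (zn : ℝ) (I : Finset ℕ) : ℝ :=
  ∑ J ∈ I.powerset, (-1 : ℝ) ^ (I \ J).card * zc n D U w zn J

/-- The associahedron right-hand sides `w_δ = |R_δ|·(|R_δ|+1)/2`. -/
noncomputable def wAs (n : ℕ) (D U : Finset ℕ) (p : ℕ × ℕ) : ℝ :=
  (((Rdiag n D U p.1 p.2).card : ℝ) * (((Rdiag n D U p.1 p.2).card : ℝ) + 1)) / 2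

/-- The associahedron value `z_{[n]} = n(n+1)/2`. -/
noncomputable def znAs (n : ℕ) : ℝ := ((n : ℝ) * ((n : ℝ) + 1)) / 2


/-! ### Auxiliary lemmas -/

section Aux

lemma neg_one_pow_sum (s : Finset ℕ) : ∑ t ∈ s.powerset, (-1:ℝ)^t.card = if s = ∅ then 1 else 0 := by
  have h : ∑ t ∈ s.powerset, (-1:ℤ)^t.card = if s = ∅ then 1 else 0 :=
    Finset.sum_powerset_neg_one_pow_card
  have h2 : ((∑ t ∈ s.powerset, (-1:ℤ)^t.card : ℤ) : ℝ) = ∑ t ∈ s.powerset, (-1:ℝ)^t.card := by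
    push_cast; ring_nf
  rw [← h2, h]
  split <;> norm_num

lemma neg_one_pow_sub (c t : ℕ) (h : t ≤ c) : (-1:ℝ)^(c - t) = (-1)^c * (-1)^t := by
  have h1 : (-1:ℝ)^(c-t) * (-1)^t = (-1)^c := by rw [← pow_add, Nat.sub_add_cancel h]
  have h2 : ((-1:ℝ)^t) * ((-1)^t) = 1 := by rw [← mul_pow]; norm_num
  calc (-1:ℝ)^(c-t) = (-1:ℝ)^(c-t) * (((-1:ℝ)^t) * ((-1)^t)) := by rw [h2, mul_one]
    _ = ((-1:ℝ)^(c-t) * (-1)^t) * (-1)^t := by ring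
    _ = (-1:ℝ)^c * (-1)^t := by rw [h1]

/-- cube lemma over ground set `N`. -/
lemma cube_sum (N A C : Finset ℕ) (hA : A ⊆ N) (hC : C ⊆ N) (hAC : Disjoint A C) :
    ∑ S ∈ N.powerset, (-1:ℝ)^S.card * (if A ⊆ S ∧ Disjoint S C then 1 else 0)
      = if A ∪ C = N then (-1:ℝ)^A.card else 0 := by
  classical
  simp_rw [mul_ite, mul_one, mul_zero]
  rw [← Finset.sum_filter]
  have hbij : (N.powerset.filter fun S => A ⊆ S ∧ Disjoint S C) =
      (N \ (A ∪ C)).powerset.image (fun T => A ∪ T) := by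
    ext S
    simp only [mem_filter, mem_powerset, mem_image]
    constructor
    · rintro ⟨hSN, hAS, hSC⟩
      refine ⟨S \ A, ?_, ?_⟩
      · intro x hx
        simp only [mem_sdiff, mem_union] at hx ⊢
        refine ⟨hSN hx.1, ?_⟩
        push_neg
        exact ⟨hx.2, fun hxC => (Finset.disjoint_left.mp hSC hx.1 hxC)⟩
      · rw [Finset.union_sdiff_self_eq_union, Finset.union_eq_right.mpr hAS]
    · rintro ⟨T, hT, rfl⟩
      refine ⟨?_, Finset.subset_union_left, ?_⟩
      · exact Finset.union_subset hA (hT.trans (Finset.sdiff_subset))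
      · refine Finset.disjoint_union_left.mpr ⟨hAC, ?_⟩
        exact Finset.disjoint_left.mpr fun x hx hxC => by
          have := hT hx; simp only [mem_sdiff, mem_union] at this; exact this.2 (Or.inr hxC)
  rw [hbij, Finset.sum_image ?inj]
  case inj =>
    intro T1 h1 T2 h2 he
    rw [Finset.mem_coe, mem_powerset] at h1 h2
    have d1 : Disjoint A T1 := Finset.disjoint_left.mpr fun x hx hx2 => by
      have := h1 hx2; simp only [mem_sdiff, mem_union] at this; exact this.2 (Or.inl hx)
    have d2 : Disjoint A T2 := Finset.disjoint_left.mpr fun x hx hx2 => by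
      have := h2 hx2; simp only [mem_sdiff, mem_union] at this; exact this.2 (Or.inl hx)
    have : (A ∪ T1) \ A = (A ∪ T2) \ A := by simp only at he; rw [he]
    rwa [Finset.union_sdiff_cancel_left d1, Finset.union_sdiff_cancel_left d2] at this
  have hcard : ∀ T ∈ (N \ (A ∪ C)).powerset, (-1:ℝ)^(A ∪ T).card = (-1:ℝ)^A.card * (-1:ℝ)^T.card := by
    intro T hT
    rw [mem_powerset] at hT
    have d : Disjoint A T := Finset.disjoint_left.mpr fun x hx hx2 => by
      have := hT hx2; simp only [mem_sdiff, mem_union] at this; exact this.2 (Or.inl hx)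
    rw [Finset.card_union_of_disjoint d, pow_add]
  rw [Finset.sum_congr rfl hcard, ← Finset.mul_sum, neg_one_pow_sum]
  have hiff : N \ (A ∪ C) = ∅ ↔ A ∪ C = N := by
    rw [Finset.sdiff_eq_empty_iff_subset]
    exact ⟨fun h => Finset.Subset.antisymm (Finset.union_subset hA hC) h, fun h => h ▸ le_refl _⟩
  split
  · next h => rw [if_pos (hiff.mp h)]; ring
  · next h => rw [if_neg (fun hh => h (hiff.mpr hh))]; ring

/-- cube lemma, `(-1)^{|N \ S|}` version. -/
lemma cube_sum' (N A C : Finset ℕ) (hA : A ⊆ N) (hC : C ⊆ N) (hAC : Disjoint A C) :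
    ∑ S ∈ N.powerset, (-1:ℝ)^((N \ S).card) * (if A ⊆ S ∧ Disjoint S C then 1 else 0)
      = if A ∪ C = N then (-1:ℝ)^((N \ A).card) else 0 := by
  have key : ∀ S : Finset ℕ, S ⊆ N → (-1:ℝ)^((N \ S).card) = (-1:ℝ)^N.card * (-1:ℝ)^S.card := by
    intro S hS
    rw [Finset.card_sdiff_of_subset hS, neg_one_pow_sub _ _ (Finset.card_le_card hS)]
  calc ∑ S ∈ N.powerset, (-1:ℝ)^((N \ S).card) * (if A ⊆ S ∧ Disjoint S C then 1 else 0)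
      = ∑ S ∈ N.powerset, (-1:ℝ)^N.card * ((-1:ℝ)^S.card * (if A ⊆ S ∧ Disjoint S C then 1 else 0)) := by
        refine Finset.sum_congr rfl fun S hS => ?_
        rw [mem_powerset] at hS
        rw [key S hS, mul_assoc]
    _ = (-1:ℝ)^N.card * (if A ∪ C = N then (-1:ℝ)^A.card else 0) := by
        rw [← Finset.mul_sum, cube_sum N A C hA hC hAC]
    _ = if A ∪ C = N then (-1:ℝ)^((N \ A).card) else 0 := by
        split
        · rw [key A hA]
        · ring

end Aux
section AB

variable {n : ℕ} {D U I K : Finset ℕ}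

lemma aI_spec (hI : ∀ i ∈ I, 1 ≤ i) :
    aI D I ∈ insert 0 D ∧ ∀ i ∈ I, aI D I < i := by
  classical
  have h0 : (0:ℕ) ∈ (insert 0 D).filter fun e => ∀ i ∈ I, e < i := by
    rw [Finset.mem_filter]
    exact ⟨Finset.mem_insert_self 0 D, fun i hi => hI i hi⟩
  obtain ⟨b, hb, he⟩ := Finset.exists_mem_eq_sup _ ⟨0, h0⟩ id
  rw [Finset.mem_filter] at hb
  unfold aI
  rw [he]
  exact ⟨hb.1, hb.2⟩

lemma le_aI {e : ℕ} (he : e ∈ insert 0 D) (h : ∀ i ∈ I, e < i) : e ≤ aI D I := by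
  classical
  exact Finset.le_sup (f := id) (by simp only [Finset.mem_filter]; exact ⟨he, h⟩)

lemma bI_spec (hI : ∀ i ∈ I, i ≤ n) :
    bI n D I ∈ insert (n+1) D ∧ ∀ i ∈ I, i < bI n D I := by
  have hne : (n+1) ∈ {e : ℕ | e ∈ insert (n + 1) D ∧ ∀ i ∈ I, i < e} := by
    refine ⟨by simp, fun i hi => Nat.lt_succ_of_le (hI i hi)⟩
  exact Nat.sInf_mem ⟨n+1, hne⟩

lemma bI_le {e : ℕ} (he : e ∈ insert (n+1) D) (h : ∀ i ∈ I, i < e) : bI n D I ≤ e :=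
  Nat.sInf_le ⟨he, h⟩

lemma aI_lt_bI (hI : I ⊆ Finset.Icc 1 n) (hne : I.Nonempty) : aI D I < bI n D I := by
  obtain ⟨i, hi⟩ := hne
  have h1 := (aI_spec (D := D) (fun j hj => (Finset.mem_Icc.mp (hI hj)).1)).2 i hi
  have h2 := (bI_spec (n := n) (D := D) (fun j hj => (Finset.mem_Icc.mp (hI hj)).2)).2 i hi
  omega

lemma aI_anti (hKK : K ⊆ I) (hI : ∀ i ∈ I, 1 ≤ i) : aI D I ≤ aI D K := by
  refine le_aI (aI_spec hI).1 fun i hi => (aI_spec hI).2 i (hKK hi)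

lemma bI_mono (hKK : K ⊆ I) (hI : ∀ i ∈ I, i ≤ n) : bI n D K ≤ bI n D I := by
  refine bI_le (bI_spec hI).1 fun i hi => (bI_spec hI).2 i (hKK hi)

/-- `aI`/`bI` computation for sets sandwiched between `D ∩ (a,b)` and `(a,b)`. -/
lemma aI_bI_eq {a b : ℕ} (ha : a ∈ insert 0 D) (hb : b ∈ insert (n+1) D)
    (hD : D ⊆ Finset.Icc 1 n) (hne : K.Nonempty) (hK : K ⊆ Finset.Icc 1 n)
    (hbound : ∀ i ∈ K, a < i ∧ i < b) (hfill : ∀ d ∈ D, a < d → d < b → d ∈ K) :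
    aI D K = a ∧ bI n D K = b := by
  have h1K : ∀ i ∈ K, 1 ≤ i := fun i hi => (Finset.mem_Icc.mp (hK hi)).1
  have hnK : ∀ i ∈ K, i ≤ n := fun i hi => (Finset.mem_Icc.mp (hK hi)).2
  obtain ⟨k, hk⟩ := hne
  constructor
  · have hle : a ≤ aI D K := le_aI ha fun i hi => (hbound i hi).1
    rcases Nat.lt_or_ge a (aI D K) with hlt | hge
    · exfalso
      have hmem := (aI_spec (D := D) h1K).1
      have haD : aI D K ∈ D := by
        rcases Finset.mem_insert.mp hmem with h0 | hD'
        · omega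
        · exact hD'
      have hlt2 : aI D K < b := lt_trans ((aI_spec (D := D) h1K).2 k hk) (hbound k hk).2
      have : aI D K ∈ K := hfill _ haD hlt hlt2
      exact lt_irrefl _ ((aI_spec (D := D) h1K).2 _ this)
    · omega
  · have hle : bI n D K ≤ b := bI_le hb fun i hi => (hbound i hi).2
    rcases Nat.lt_or_ge (bI n D K) b with hlt | hge
    · exfalso
      have hmem := (bI_spec (n := n) (D := D) hnK).1
      have hbD : bI n D K ∈ D := by
        rcases Finset.mem_insert.mp hmem with h0 | hD'
        · exfalso
          rcases Finset.mem_insert.mp hb with h1 | h1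
          · omega
          · have := Finset.mem_Icc.mp (hD h1); omega
        · exact hD'
      have hgt : a < bI n D K := lt_trans (hbound k hk).1 ((bI_spec (n := n) (D := D) hnK).2 k hk)
      have : bI n D K ∈ K := hfill _ hbD hgt hlt
      exact lt_irrefl _ ((bI_spec (n := n) (D := D) hnK).2 _ this)
    · omega

end AB
section Nested

variable {n : ℕ} {D U J K : Finset ℕ} {u : ℕ}

lemma nested_insert (hK : IsNested n D K) (hu : u ∈ Finset.Icc 1 n)
    (h1 : aI D K ≤ u) (h2 : u ≤ bI n D K) : IsNested n D (insert u K) := by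
  obtain ⟨hne, hsub, hfill⟩ := hK
  have h1K : ∀ i ∈ K, 1 ≤ i := fun i hi => (Finset.mem_Icc.mp (hsub hi)).1
  have hnK : ∀ i ∈ K, i ≤ n := fun i hi => (Finset.mem_Icc.mp (hsub hi)).2
  have h1K' : ∀ i ∈ insert u K, 1 ≤ i := by
    intro i hi; rcases Finset.mem_insert.mp hi with rfl | hi
    · exact (Finset.mem_Icc.mp hu).1
    · exact h1K i hi
  have hnK' : ∀ i ∈ insert u K, i ≤ n := by
    intro i hi; rcases Finset.mem_insert.mp hi with rfl | hi
    · exact (Finset.mem_Icc.mp hu).2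
    · exact hnK i hi
  refine ⟨⟨u, Finset.mem_insert_self u K⟩, ?_, ?_⟩
  · intro i hi; rcases Finset.mem_insert.mp hi with rfl | hi
    · exact hu
    · exact hsub hi
  · intro d hd hda hdb
    have haa : aI D (insert u K) ≤ aI D K :=
      aI_anti (Finset.subset_insert u K) h1K'
    have hbb : bI n D K ≤ bI n D (insert u K) :=
      bI_mono (Finset.subset_insert u K) hnK'
    rcases Nat.lt_or_ge (aI D K) d with had | had
    · rcases Nat.lt_or_ge d (bI n D K) with hbd | hbd
      · exact Finset.mem_insert_of_mem (hfill d hd had hbd)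
      · -- d ≥ bI K
        rcases Nat.lt_or_ge u d with hud | hud
        · exfalso
          have : bI n D (insert u K) ≤ d := by
            refine bI_le (Finset.mem_insert_of_mem hd) ?_
            intro i hi; rcases Finset.mem_insert.mp hi with rfl | hi
            · exact hud
            · exact lt_of_lt_of_le ((bI_spec hnK).2 i hi) hbd
          omega
        · have : u = d := le_antisymm (le_trans h2 hbd) hud
          exact this ▸ Finset.mem_insert_self u K
    · -- d ≤ aI K
      rcases Nat.lt_or_ge d u with hud | hud
      · exfalso
        have : d ≤ aI D (insert u K) := by
          refine le_aI (Finset.mem_insert_of_mem hd) ?_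
          intro i hi; rcases Finset.mem_insert.mp hi with rfl | hi
          · exact hud
          · exact lt_of_le_of_lt had ((aI_spec h1K).2 i hi)
        omega
      · have : u = d := le_antisymm hud (le_trans had h1)
        exact this ▸ Finset.mem_insert_self u K

lemma nested_of_sandwich {a b : ℕ} (ha : a ∈ insert 0 D) (hb : b ∈ insert (n+1) D)
    (hD : D ⊆ Finset.Icc 1 n) (hne : K.Nonempty) (hK : K ⊆ Finset.Icc 1 n)
    (hbound : ∀ i ∈ K, a < i ∧ i < b) (hfill : ∀ d ∈ D, a < d → d < b → d ∈ K) :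
    IsNested n D K := by
  obtain ⟨haK, hbK⟩ := aI_bI_eq ha hb hD hne hK hbound hfill
  exact ⟨hne, hK, fun d hd h1 h2 => hfill d hd (haK ▸ h1) (hbK ▸ h2)⟩

/-- The "forbidden" set for `K` to be a component. -/
noncomputable def bad (n : ℕ) (D U K : Finset ℕ) : Finset ℕ :=
  ((U.filter fun u => aI D K < u ∧ u < bI n D K) \ K) ∪
    ((insert (aI D K) {bI n D K}) ∩ Finset.Icc 1 n)

lemma bad_subset (hU : U ⊆ Finset.Icc 1 n) : bad n D U K ⊆ Finset.Icc 1 n := by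
  intro x hx
  rcases Finset.mem_union.mp hx with h | h
  · exact hU (Finset.mem_filter.mp (Finset.mem_sdiff.mp h).1).1
  · exact (Finset.mem_inter.mp h).2

lemma disjoint_K_bad (hK : IsNested n D K) : Disjoint K (bad n D U K) := by
  rw [Finset.disjoint_right]
  intro x hx hxK
  have h1K : ∀ i ∈ K, 1 ≤ i := fun i hi => (Finset.mem_Icc.mp (hK.2.1 hi)).1
  have hnK : ∀ i ∈ K, i ≤ n := fun i hi => (Finset.mem_Icc.mp (hK.2.1 hi)).2
  rcases Finset.mem_union.mp hx with h | h
  · exact (Finset.mem_sdiff.mp h).2 hxK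
  · have hx2 := (Finset.mem_inter.mp h).1
    rcases Finset.mem_insert.mp hx2 with hxe | hx3
    · have := (aI_spec (D := D) h1K).2 x hxK; omega
    · rw [Finset.mem_singleton] at hx3
      have := (bI_spec (n := n) (D := D) hnK).2 x hxK; omega

lemma mem_comps_iff (hDU : D ∪ U = Finset.Icc 1 n) (hJ : J ⊆ Finset.Icc 1 n) :
    K ∈ nestedComponents n D J ↔ IsNested n D K ∧ K ⊆ J ∧ Disjoint J (bad n D U K) := by
  classical
  have hU : U ⊆ Finset.Icc 1 n := hDU ▸ Finset.subset_union_right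
  rw [nestedComponents, Finset.mem_filter, Finset.mem_powerset]
  constructor
  · rintro ⟨hKJ, hnest, hmax⟩
    refine ⟨hnest, hKJ, ?_⟩
    rw [Finset.disjoint_right]
    intro x hxbad hxJ
    have h1K : ∀ i ∈ K, 1 ≤ i := fun i hi => (Finset.mem_Icc.mp (hnest.2.1 hi)).1
    have hnK : ∀ i ∈ K, i ≤ n := fun i hi => (Finset.mem_Icc.mp (hnest.2.1 hi)).2
    have insert_nested : ∀ u, u ∈ Finset.Icc 1 n → aI D K ≤ u → u ≤ bI n D K → u ∈ J → u ∈ K := by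
      intro u hu h1 h2 huJ
      have hnest' := nested_insert hnest hu h1 h2
      have := hmax (insert u K) (Finset.mem_powerset.mpr (Finset.insert_subset huJ hKJ))
        hnest' (Finset.subset_insert u K)
      rw [this]
      exact Finset.mem_insert_self u K
    rcases Finset.mem_union.mp hxbad with h | h
    · obtain ⟨hxf, hxnK⟩ := Finset.mem_sdiff.mp h
      obtain ⟨hxU, hxa, hxb⟩ := Finset.mem_filter.mp hxf
      exact hxnK (insert_nested x (hU hxU) (le_of_lt hxa) (le_of_lt hxb) hxJ)
    · obtain ⟨hx2, hxI⟩ := Finset.mem_inter.mp h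
      have hab : aI D K < bI n D K := aI_lt_bI hnest.2.1 hnest.1
      rcases Finset.mem_insert.mp hx2 with hxe | hx3
      · have hxk : x ∈ K := insert_nested x hxI (le_of_eq hxe.symm) (by omega) hxJ
        have := (aI_spec (D := D) h1K).2 x hxk; omega
      · rw [Finset.mem_singleton] at hx3
        have hxk : x ∈ K := insert_nested x hxI (by omega) (le_of_eq hx3) hxJ
        have := (bI_spec (n := n) (D := D) hnK).2 x hxk; omega
  · rintro ⟨hnest, hKJ, hdisj⟩
    refine ⟨hKJ, hnest, ?_⟩
    intro K'' hK''J hnest'' hKK''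
    rw [Finset.mem_powerset] at hK''J
    refine Finset.Subset.antisymm hKK'' ?_
    intro e he
    have h1K : ∀ i ∈ K, 1 ≤ i := fun i hi => (Finset.mem_Icc.mp (hnest.2.1 hi)).1
    have hnK : ∀ i ∈ K, i ≤ n := fun i hi => (Finset.mem_Icc.mp (hnest.2.1 hi)).2
    have h1K'' : ∀ i ∈ K'', 1 ≤ i := fun i hi => (Finset.mem_Icc.mp (hnest''.2.1 hi)).1
    have hnK'' : ∀ i ∈ K'', i ≤ n := fun i hi => (Finset.mem_Icc.mp (hnest''.2.1 hi)).2
    have heJ : e ∈ J := hK''J he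
    have heIcc : e ∈ Finset.Icc 1 n := hnest''.2.1 he
    have hbadJ : ∀ x ∈ bad n D U K, x ∉ J := fun x hx => Finset.disjoint_right.mp hdisj hx
    set a := aI D K with hadef
    set b := bI n D K with hbdef
    have haa : aI D K'' ≤ a := aI_anti hKK'' h1K''
    have hbb : b ≤ bI n D K'' := bI_mono hKK'' hnK''
    have hea : aI D K'' < e := (aI_spec h1K'').2 e he
    have heb : e < bI n D K'' := (bI_spec hnK'').2 e he
    have hab : a < b := aI_lt_bI hnest.2.1 hnest.1
    have haIcc : 1 ≤ a → a ∈ Finset.Icc 1 n := by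
      intro h1
      obtain ⟨k, hk⟩ := hnest.1
      have := (aI_spec (D := D) h1K).2 k hk
      have := hnK k hk
      exact Finset.mem_Icc.mpr ⟨h1, by omega⟩
    have hbIcc : b ≤ n → b ∈ Finset.Icc 1 n := by
      intro h1
      obtain ⟨k, hk⟩ := hnest.1
      have := (bI_spec (n := n) (D := D) hnK).2 k hk
      have := h1K k hk
      exact Finset.mem_Icc.mpr ⟨by omega, h1⟩
    have haD : 1 ≤ a → a ∈ D := by
      intro h1
      rcases Finset.mem_insert.mp (aI_spec (D := D) h1K).1 with h | h
      · omega
      · exact h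
    have hbD : b ≤ n → b ∈ D := by
      intro h1
      rcases Finset.mem_insert.mp (bI_spec (n := n) (D := D) hnK).1 with h | h
      · omega
      · exact h
    have habad : 1 ≤ a → a ∉ J := by
      intro h1
      refine hbadJ a (Finset.mem_union_right _ ?_)
      exact Finset.mem_inter.mpr ⟨Finset.mem_insert_self _ _, haIcc h1⟩
    have hbbad : b ≤ n → b ∉ J := by
      intro h1
      refine hbadJ b (Finset.mem_union_right _ ?_)
      exact Finset.mem_inter.mpr ⟨Finset.mem_insert_of_mem (Finset.mem_singleton_self _), hbIcc h1⟩
    rcases Nat.lt_or_ge a e with hae | hae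
    · rcases Nat.lt_or_ge e b with heb' | heb'
      · -- a < e < b
        have heDU : e ∈ D ∪ U := hDU ▸ heIcc
        rcases Finset.mem_union.mp heDU with heD | heU
        · exact hnest.2.2 e heD hae heb'
        · by_contra heK
          refine hbadJ e (Finset.mem_union_left _ ?_) heJ
          exact Finset.mem_sdiff.mpr ⟨Finset.mem_filter.mpr ⟨heU, hae, heb'⟩, heK⟩
      · -- e ≥ b
        exfalso
        have h1 : 1 ≤ e := (Finset.mem_Icc.mp heIcc).1
        have hen : e ≤ n := (Finset.mem_Icc.mp heIcc).2
        have hbn : b ≤ n := by omega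
        rcases Nat.eq_or_lt_of_le heb' with heq | hlt
        · exact hbbad hbn (heq ▸ heJ)
        · have : b ∈ K'' := hnest''.2.2 b (hbD hbn) (by omega) (by omega)
          exact hbbad hbn (hK''J this)
    · -- e ≤ a
      exfalso
      have h1 : 1 ≤ e := (Finset.mem_Icc.mp heIcc).1
      have h1a : 1 ≤ a := by omega
      rcases Nat.eq_or_lt_of_le hae with heq | hlt
      · exact habad h1a (heq ▸ heJ)
      · have : a ∈ K'' := hnest''.2.2 a (haD h1a) (by omega) (by omega)
        exact habad h1a (hK''J this)

end Nested
section WJchar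

variable {n : ℕ} {D U : Finset ℕ}

/-- Bounds on elements of `U`. -/
lemma U_bounds (hDU : D ∪ U = Finset.Icc 1 n) (hdisj : Disjoint D U)
    (h1D : 1 ∈ D) (hnD : n ∈ D) : ∀ u ∈ U, 2 ≤ u ∧ u + 1 ≤ n := by
  intro u hu
  have hIcc : u ∈ Finset.Icc 1 n := hDU ▸ Finset.mem_union_right _ hu
  rw [Finset.mem_Icc] at hIcc
  have h1 : u ≠ 1 := fun h => Finset.disjoint_left.mp hdisj (h ▸ h1D) hu
  have h2 : u ≠ n := fun h => Finset.disjoint_left.mp hdisj (h ▸ hnD) hu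
  omega

lemma mem_WJ_iff (hDU : D ∪ U = Finset.Icc 1 n) (hdisj : Disjoint D U)
    (h1D : 1 ∈ D) (hnD : n ∈ D)
    {a b : ℕ} (ha : a ∈ insert 0 D) (ha1 : a ≤ 1) (hb : b ∈ insert (n+1) D) (hbn : n ≤ b)
    {S K : Finset ℕ} (hS : S ⊆ U) (hK : K = (D.filter fun d => a < d ∧ d < b) ∪ S)
    (hne : K.Nonempty) (p : ℕ × ℕ) :
    p ∈ WJ n D U K ↔ (IsProper n D U p.1 p.2 ∧ (p.1 = a ∨ p.1 ∈ S) ∧ (p.2 = b ∨ p.2 ∈ S) ∧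
      ∀ u ∈ S, ¬ (p.1 < u ∧ u < p.2)) := by
  classical
  obtain ⟨x, y⟩ := p
  have hD : D ⊆ Finset.Icc 1 n := hDU ▸ Finset.subset_union_left
  have hU : U ⊆ Finset.Icc 1 n := hDU ▸ Finset.subset_union_right
  have hu2 := U_bounds hDU hdisj h1D hnD
  have hUoo : ∀ u ∈ U, a < u ∧ u < b := fun u hu => by have := hu2 u hu; omega
  have hKIcc : K ⊆ Finset.Icc 1 n := by
    rw [hK]
    exact Finset.union_subset ((Finset.filter_subset _ _).trans hD) (hS.trans hU)
  have hbound : ∀ i ∈ K, a < i ∧ i < b := by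
    intro i hi
    rw [hK, Finset.mem_union] at hi
    rcases hi with hi | hi
    · exact (Finset.mem_filter.mp hi).2
    · exact hUoo i (hS hi)
  have hfill : ∀ d ∈ D, a < d → d < b → d ∈ K := by
    intro d hd h1 h2
    rw [hK, Finset.mem_union]
    exact Or.inl (Finset.mem_filter.mpr ⟨hd, h1, h2⟩)
  obtain ⟨haK, hbK⟩ := aI_bI_eq ha hb hD hne hKIcc hbound hfill
  have hSK : S ⊆ K := by rw [hK]; exact Finset.subset_union_right
  have hKU : ∀ u ∈ U, (u ∈ K ↔ u ∈ S) := by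
    intro u hu
    constructor
    · intro huK
      rw [hK, Finset.mem_union] at huK
      rcases huK with h | h
      · exact absurd hu (Finset.disjoint_left.mp hdisj (Finset.mem_filter.mp h).1)
      · exact h
    · exact fun h => hSK h
  have haU : a ∉ U := fun h => by have := hu2 a h; omega
  have hbU : b ∉ U := fun h => by have := hu2 b h; omega
  rw [WJ, Finset.mem_filter]
  constructor
  · rintro ⟨hrange, ⟨hxy, hx, hy, hbtw⟩, hprop⟩
    refine ⟨hprop, ?_, ?_, ?_⟩
    · rcases hx with h | h
      · exact Or.inl (h.trans haK)
      · exact Or.inr ((hKU _ h.2.1).mp h.1)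
    · rcases hy with h | h
      · exact Or.inl (h.trans hbK)
      · exact Or.inr ((hKU _ h.2.1).mp h.1)
    · intro u hu
      exact hbtw u (Finset.mem_inter.mpr ⟨hSK hu, hS hu⟩)
  · rintro ⟨hprop, hx, hy, hbtw⟩
    have hxy := hprop.1
    have hyn := hprop.2.1
    have hnb := hprop.2.2
    refine ⟨?_, ⟨hxy, ?_, ?_, ?_⟩, hprop⟩
    · rw [Finset.mem_product, Finset.mem_range, Finset.mem_range]
      constructor <;> omega
    · -- x side
      rcases hx with rfl | hxS
      · exact Or.inl haK.symm
      · refine Or.inr ⟨hSK hxS, hS hxS, ?_⟩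
        intro y' hcons hy'K
        obtain ⟨hxU, hy'U, hxy', hnoz⟩ := hcons
        have hy'S : y' ∈ S := (hKU y' hy'U).mp hy'K
        have hyge : y ≤ y' := by
          by_contra hlt
          exact hbtw y' hy'S ⟨hxy', by omega⟩
        rcases hy with rfl | hyS
        · have := hUoo y' hy'U; omega
        · have hyU : y ∈ U := hS hyS
          have hyy' : y = y' := by
            by_contra hne'
            exact hnoz y hyU ⟨hxy, by omega⟩
          subst hyy'
          exact hnb (Or.inr (Or.inl ⟨⟨y, hyU⟩, Or.inr (Or.inr ⟨hxU, hy'U, hxy, hnoz⟩)⟩))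
    · -- y side
      rcases hy with rfl | hyS
      · exact Or.inl hbK.symm
      · refine Or.inr ⟨hSK hyS, hS hyS, ?_⟩
        intro x' hcons hx'K
        obtain ⟨hx'U, hyU, hx'y, hnoz⟩ := hcons
        have hx'S : x' ∈ S := (hKU x' hx'U).mp hx'K
        have hxle : x' ≤ x := by
          by_contra hlt
          exact hbtw x' hx'S ⟨by omega, hx'y⟩
        rcases hx with rfl | hxS
        · have := hUoo x' hx'U; omega
        · have hxU : x ∈ U := hS hxS
          have hxx' : x = x' := by
            by_contra hne'
            exact hnoz x hxU ⟨by omega, hxy⟩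
          subst hxx'
          exact hnb (Or.inr (Or.inl ⟨⟨x, hxU⟩, Or.inr (Or.inr ⟨hx'U, hyU, hxy, hnoz⟩)⟩))
    · intro u hu
      rw [Finset.mem_inter] at hu
      exact hbtw u ((hKU u hu.2).mp hu.1)

end WJchar

section Proper

variable {n : ℕ} {D U : Finset ℕ}

lemma one_mem_Dbar : (1:ℕ) ∈ Dbar n D → True := fun _ => trivial

lemma proper_0n (hDU : D ∪ U = Finset.Icc 1 n) (hdisj : Disjoint D U)
    (h1D : 1 ∈ D) (hnD : n ∈ D) (hn : 2 ≤ n) : IsProper n D U 0 n := by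
  have hu2 := U_bounds hDU hdisj h1D hnD
  refine ⟨by omega, by omega, ?_⟩
  rintro (⟨_, _, _, hcons⟩ | ⟨hUne, h⟩ | ⟨_, _, hy⟩)
  · exact hcons 1 (by simp [Dbar, h1D]) (by omega)
  · rcases h with ⟨_, hnU, _⟩ | ⟨habs, _⟩ | ⟨h0U, _⟩
    · exact Finset.disjoint_left.mp hdisj hnD hnU
    · omega
    · have := hu2 0 h0U; omega
  · omega

lemma proper_1n1 (hDU : D ∪ U = Finset.Icc 1 n) (hdisj : Disjoint D U)
    (h1D : 1 ∈ D) (hnD : n ∈ D) (hn : 2 ≤ n) : IsProper n D U 1 (n+1) := by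
  have hu2 := U_bounds hDU hdisj h1D hnD
  refine ⟨by omega, by omega, ?_⟩
  rintro (⟨_, _, _, hcons⟩ | ⟨hUne, h⟩ | ⟨_, hx, _⟩)
  · exact hcons n (by simp [Dbar, hnD]) (by omega)
  · rcases h with ⟨habs, _⟩ | ⟨_, h1U, _⟩ | ⟨h1U, _⟩
    · omega
    · exact Finset.disjoint_left.mp hdisj h1D h1U
    · exact Finset.disjoint_left.mp hdisj h1D h1U
  · omega

lemma proper_0n1 (hDU : D ∪ U = Finset.Icc 1 n) (hdisj : Disjoint D U)
    (h1D : 1 ∈ D) (hnD : n ∈ D) (hn : 2 ≤ n) (hUne : U.Nonempty) :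
    IsProper n D U 0 (n+1) := by
  have hu2 := U_bounds hDU hdisj h1D hnD
  refine ⟨by omega, by omega, ?_⟩
  rintro (⟨_, _, _, hcons⟩ | ⟨_, h⟩ | ⟨hUe, _⟩)
  · exact hcons 1 (by simp [Dbar, h1D]) (by omega)
  · rcases h with ⟨_, hnU, _⟩ | ⟨_, h0U, _⟩ | ⟨h0U, _⟩
    · have := hu2 _ hnU; omega
    · have := hu2 _ h0U; omega
    · have := hu2 _ h0U; omega
  · exact (Finset.nonempty_iff_ne_empty.mp hUne) hUe

lemma not_proper_0n1 (hUe : U = ∅) : ¬ IsProper n D U 0 (n+1) := by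
  rintro ⟨_, _, hnb⟩
  exact hnb (Or.inr (Or.inr ⟨hUe, rfl, rfl⟩))

lemma proper_1n (hDU : D ∪ U = Finset.Icc 1 n) (hdisj : Disjoint D U)
    (h1D : 1 ∈ D) (hnD : n ∈ D) (hn : 2 ≤ n)
    (hmid : (D.filter fun d => 1 < d ∧ d < n).Nonempty) : IsProper n D U 1 n := by
  have hu2 := U_bounds hDU hdisj h1D hnD
  obtain ⟨d, hd⟩ := hmid
  rw [Finset.mem_filter] at hd
  refine ⟨by omega, by omega, ?_⟩
  rintro (⟨_, _, _, hcons⟩ | ⟨_, h⟩ | ⟨_, hx, _⟩)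
  · exact hcons d (by simp [Dbar, hd.1]) (by omega)
  · rcases h with ⟨habs, _⟩ | ⟨habs, _⟩ | ⟨h1U, _⟩
    · omega
    · omega
    · exact Finset.disjoint_left.mp hdisj h1D h1U
  · omega

lemma not_proper_1n (hDU : D ∪ U = Finset.Icc 1 n) (hdisj : Disjoint D U)
    (h1D : 1 ∈ D) (hnD : n ∈ D) (hn : 2 ≤ n)
    (hmid : (D.filter fun d => 1 < d ∧ d < n) = ∅) : ¬ IsProper n D U 1 n := by
  rintro ⟨_, _, hnb⟩
  refine hnb (Or.inl ⟨by simp [Dbar, h1D], by simp [Dbar, hnD], by omega, ?_⟩)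
  intro z hz hbet
  rw [Dbar, Finset.mem_insert, Finset.mem_insert] at hz
  rcases hz with rfl | rfl | hzD
  · omega
  · omega
  · have : z ∈ D.filter fun d => 1 < d ∧ d < n := Finset.mem_filter.mpr ⟨hzD, hbet.1, hbet.2⟩
    rw [hmid] at this
    exact absurd this (Finset.notMem_empty z)

end Proper
section Steps

/-- `g(K)`: contribution of one nested component. -/
noncomputable def gW (n : ℕ) (D U : Finset ℕ) (w : ℕ × ℕ → ℝ) (zn : ℝ) (K : Finset ℕ) : ℝ :=
  (∑ p ∈ WJ n D U K, w p) - (((WJ n D U K).card : ℝ) - 1) * zn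

/-- summand over `K`. -/
noncomputable def psi (n : ℕ) (D U : Finset ℕ) (w : ℕ × ℕ → ℝ) (zn : ℝ) (K : Finset ℕ) : ℝ :=
  (if IsNested n D K ∧ K ∪ bad n D U K = Finset.Icc 1 n
    then (-1:ℝ)^((Finset.Icc 1 n \ K).card) else 0) * gW n D U w zn K

variable {n : ℕ} {D U : Finset ℕ} {w : ℕ × ℕ → ℝ} {zn : ℝ}

lemma step1 (hDU : D ∪ U = Finset.Icc 1 n) :
    yI n D U w zn (Finset.Icc 1 n) = ∑ K ∈ (Finset.Icc 1 n).powerset, psi n D U w zn K := by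
  classical
  have hU : U ⊆ Finset.Icc 1 n := hDU ▸ Finset.subset_union_right
  have hcomps : ∀ J ∈ (Finset.Icc 1 n).powerset, zc n D U w zn J =
      ∑ K ∈ (Finset.Icc 1 n).powerset,
        (if K ∈ nestedComponents n D J then gW n D U w zn K else 0) := by
    intro J hJ
    rw [Finset.sum_ite_mem]
    rw [Finset.inter_eq_right.mpr ?hsub]
    · rfl
    case hsub =>
      intro K hK
      have h1 : K ∈ J.powerset := Finset.mem_filter.mp hK |>.1
      rw [Finset.mem_powerset] at h1 ⊢
      exact h1.trans (Finset.mem_powerset.mp hJ)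
  rw [yI]
  calc ∑ J ∈ (Finset.Icc 1 n).powerset, (-1:ℝ)^((Finset.Icc 1 n \ J).card) * zc n D U w zn J
      = ∑ J ∈ (Finset.Icc 1 n).powerset, ∑ K ∈ (Finset.Icc 1 n).powerset,
          (-1:ℝ)^((Finset.Icc 1 n \ J).card) *
            (if K ∈ nestedComponents n D J then gW n D U w zn K else 0) := by
        refine Finset.sum_congr rfl fun J hJ => ?_
        rw [hcomps J hJ, Finset.mul_sum]
    _ = ∑ K ∈ (Finset.Icc 1 n).powerset, ∑ J ∈ (Finset.Icc 1 n).powerset,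
          (-1:ℝ)^((Finset.Icc 1 n \ J).card) *
            (if K ∈ nestedComponents n D J then gW n D U w zn K else 0) := Finset.sum_comm
    _ = ∑ K ∈ (Finset.Icc 1 n).powerset,
          (∑ J ∈ (Finset.Icc 1 n).powerset, (-1:ℝ)^((Finset.Icc 1 n \ J).card) *
            (if K ∈ nestedComponents n D J then 1 else 0)) * gW n D U w zn K := by
        refine Finset.sum_congr rfl fun K hK => ?_
        rw [Finset.sum_mul]
        refine Finset.sum_congr rfl fun J hJ => ?_
        split_ifs <;> ring
    _ = ∑ K ∈ (Finset.Icc 1 n).powerset, psi n D U w zn K := by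
        refine Finset.sum_congr rfl fun K hK => ?_
        rw [psi]
        congr 1
        by_cases hnest : IsNested n D K
        · have hcong : ∀ J ∈ (Finset.Icc 1 n).powerset,
              (-1:ℝ)^((Finset.Icc 1 n \ J).card) * (if K ∈ nestedComponents n D J then 1 else 0)
              = (-1:ℝ)^((Finset.Icc 1 n \ J).card) *
                (if K ⊆ J ∧ Disjoint J (bad n D U K) then 1 else 0) := by
            intro J hJ
            congr 1
            have hiff := mem_comps_iff (U := U) (K := K) hDU (Finset.mem_powerset.mp hJ)
            simp only [hiff, hnest, true_and]
          rw [Finset.sum_congr rfl hcong,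
            cube_sum' (Finset.Icc 1 n) K (bad n D U K) (Finset.mem_powerset.mp hK)
              (bad_subset hU) (disjoint_K_bad hnest)]
          simp [hnest]
        · have hcong : ∀ J ∈ (Finset.Icc 1 n).powerset,
              (-1:ℝ)^((Finset.Icc 1 n \ J).card) * (if K ∈ nestedComponents n D J then 1 else 0)
              = 0 := by
            intro J hJ
            rw [if_neg, mul_zero]
            intro hmem
            exact hnest ((mem_comps_iff hDU (Finset.mem_powerset.mp hJ)).mp hmem).1
          rw [Finset.sum_congr rfl hcong, Finset.sum_const, smul_zero]
          simp [hnest]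

end Steps
section Step2

/-- `D ∩ (a,b)` as a filter. -/
noncomputable def DabF (D : Finset ℕ) (a b : ℕ) : Finset ℕ := D.filter fun d => a < d ∧ d < b

variable {n : ℕ} {D U : Finset ℕ} {w : ℕ × ℕ → ℝ} {zn : ℝ}

lemma ha_mem (h1D : 1 ∈ D) {a : ℕ} (ha : a = 0 ∨ a = 1) : a ∈ insert 0 D := by
  rcases ha with rfl | rfl
  · exact Finset.mem_insert_self _ _
  · exact Finset.mem_insert_of_mem h1D

lemma hb_mem (hnD : n ∈ D) {b : ℕ} (hb : b = n ∨ b = n + 1) : b ∈ insert (n+1) D := by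
  rcases hb with rfl | rfl
  · exact Finset.mem_insert_of_mem hnD
  · exact Finset.mem_insert_self _ _

lemma sandwich_props (hDU : D ∪ U = Finset.Icc 1 n) (hdisj : Disjoint D U)
    (h1D : 1 ∈ D) (hnD : n ∈ D) (hn : 2 ≤ n)
    {a b : ℕ} (ha : a = 0 ∨ a = 1) (hb : b = n ∨ b = n + 1)
    {S : Finset ℕ} (hS : S ⊆ U) (hne : (DabF D a b ∪ S).Nonempty) :
    IsNested n D (DabF D a b ∪ S) ∧
      aI D (DabF D a b ∪ S) = a ∧ bI n D (DabF D a b ∪ S) = b ∧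
      (DabF D a b ∪ S) ∪ bad n D U (DabF D a b ∪ S) = Finset.Icc 1 n := by
  classical
  set K := DabF D a b ∪ S with hK
  have hD : D ⊆ Finset.Icc 1 n := hDU ▸ Finset.subset_union_left
  have hU : U ⊆ Finset.Icc 1 n := hDU ▸ Finset.subset_union_right
  have hu2 := U_bounds hDU hdisj h1D hnD
  have hUoo : ∀ u ∈ U, a < u ∧ u < b := by
    intro u hu; have := hu2 u hu; rcases ha with rfl | rfl <;> rcases hb with rfl | rfl <;> omega
  have hKIcc : K ⊆ Finset.Icc 1 n :=
    Finset.union_subset ((Finset.filter_subset _ _).trans hD) (hS.trans hU)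
  have hbound : ∀ i ∈ K, a < i ∧ i < b := by
    intro i hi
    rcases Finset.mem_union.mp hi with hi | hi
    · exact (Finset.mem_filter.mp hi).2
    · exact hUoo i (hS hi)
  have hfill : ∀ d ∈ D, a < d → d < b → d ∈ K := fun d hd h1 h2 =>
    Finset.mem_union_left _ (Finset.mem_filter.mpr ⟨hd, h1, h2⟩)
  have ha' := ha_mem h1D ha
  have hb' := hb_mem hnD hb
  obtain ⟨haK, hbK⟩ := aI_bI_eq ha' hb' hD hne hKIcc hbound hfill
  have hnest : IsNested n D K := nested_of_sandwich ha' hb' hD hne hKIcc hbound hfill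
  refine ⟨hnest, haK, hbK, ?_⟩
  apply Finset.Subset.antisymm
  · exact Finset.union_subset hKIcc (bad_subset hU)
  · intro i hi
    rw [Finset.mem_Icc] at hi
    have hiDU : i ∈ D ∪ U := hDU ▸ Finset.mem_Icc.mpr hi
    rw [Finset.mem_union]
    rcases Finset.mem_union.mp hiDU with hiD | hiU
    · by_cases hia : a < i
      · by_cases hib : i < b
        · exact Or.inl (hfill i hiD hia hib)
        · -- i ≥ b, so i = b since i ≤ n ≤ b or b = n+1 > n ≥ i
          have : i = b := by rcases hb with rfl | rfl <;> omega
          refine Or.inr (Finset.mem_union_right _ (Finset.mem_inter.mpr ⟨?_, ?_⟩))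
          · rw [haK, hbK, this]
            exact Finset.mem_insert_of_mem (Finset.mem_singleton_self _)
          · exact Finset.mem_Icc.mpr hi
      · have : i = a := by rcases ha with rfl | rfl <;> omega
        refine Or.inr (Finset.mem_union_right _ (Finset.mem_inter.mpr ⟨?_, ?_⟩))
        · rw [haK, this]
          exact Finset.mem_insert_self _ _
        · exact Finset.mem_Icc.mpr hi
    · by_cases hiS : i ∈ S
      · exact Or.inl (Finset.mem_union_right _ hiS)
      · refine Or.inr (Finset.mem_union_left _ (Finset.mem_sdiff.mpr ⟨?_, ?_⟩))
        · rw [haK, hbK]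
          exact Finset.mem_filter.mpr ⟨hiU, hUoo i hiU⟩
        · intro hiK
          rcases Finset.mem_union.mp hiK with h | h
          · exact Finset.disjoint_left.mp hdisj (Finset.mem_filter.mp h).1 hiU
          · exact hiS h

lemma recomp (hDU : D ∪ U = Finset.Icc 1 n) (hdisj : Disjoint D U)
    (h1D : 1 ∈ D) (hnD : n ∈ D) (hn : 2 ≤ n)
    {K : Finset ℕ} (hnest : IsNested n D K)
    (hfull : K ∪ bad n D U K = Finset.Icc 1 n) :
    (aI D K = 0 ∨ aI D K = 1) ∧ (bI n D K = n ∨ bI n D K = n + 1) ∧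
      K = DabF D (aI D K) (bI n D K) ∪ (K ∩ U) := by
  classical
  have hKIcc := hnest.2.1
  have h1K : ∀ i ∈ K, 1 ≤ i := fun i hi => (Finset.mem_Icc.mp (hKIcc hi)).1
  have hnK : ∀ i ∈ K, i ≤ n := fun i hi => (Finset.mem_Icc.mp (hKIcc hi)).2
  have haspec := aI_spec (D := D) h1K
  have hbspec := bI_spec (n := n) (D := D) hnK
  have hab : aI D K < bI n D K := aI_lt_bI hKIcc hnest.1
  have hbtop : bI n D K ≤ n + 1 := bI_le (Finset.mem_insert_self _ _) fun i hi => by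
    have := hnK i hi; omega
  have ha1 : aI D K ≤ 1 := by
    by_contra hgt
    push_neg at hgt
    have h1Icc : (1:ℕ) ∈ Finset.Icc 1 n := Finset.mem_Icc.mpr ⟨le_refl _, by omega⟩
    have := hfull ▸ h1Icc
    rw [← hfull] at h1Icc
    rcases Finset.mem_union.mp h1Icc with h | h
    · have := haspec.2 1 h; omega
    · rcases Finset.mem_union.mp h with h | h
      · have h1U := (Finset.mem_filter.mp (Finset.mem_sdiff.mp h).1).1
        exact Finset.disjoint_left.mp hdisj h1D h1U
      · have := (Finset.mem_inter.mp h).1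
        rcases Finset.mem_insert.mp this with h2 | h2
        · omega
        · rw [Finset.mem_singleton] at h2; omega
  have hbn : n ≤ bI n D K := by
    by_contra hlt
    push_neg at hlt
    have hnIcc : n ∈ Finset.Icc 1 n := Finset.mem_Icc.mpr ⟨by omega, le_refl _⟩
    rw [← hfull] at hnIcc
    rcases Finset.mem_union.mp hnIcc with h | h
    · have := hbspec.2 n h; omega
    · rcases Finset.mem_union.mp h with h | h
      · have hnU := (Finset.mem_filter.mp (Finset.mem_sdiff.mp h).1).1
        exact Finset.disjoint_left.mp hdisj hnD hnU
      · have := (Finset.mem_inter.mp h).1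
        rcases Finset.mem_insert.mp this with h2 | h2
        · omega
        · rw [Finset.mem_singleton] at h2; omega
  refine ⟨by omega, by omega, ?_⟩
  apply Finset.Subset.antisymm
  · intro i hi
    have hiDU : i ∈ D ∪ U := hDU ▸ hKIcc hi
    rcases Finset.mem_union.mp hiDU with hiD | hiU
    · exact Finset.mem_union_left _ (Finset.mem_filter.mpr ⟨hiD, haspec.2 i hi, hbspec.2 i hi⟩)
    · exact Finset.mem_union_right _ (Finset.mem_inter.mpr ⟨hi, hiU⟩)
  · refine Finset.union_subset ?_ (Finset.inter_subset_left)
    intro d hd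
    rw [DabF, Finset.mem_filter] at hd
    exact hnest.2.2 d hd.1 hd.2.1 hd.2.2

lemma step2 (hDU : D ∪ U = Finset.Icc 1 n) (hdisj : Disjoint D U)
    (h1D : 1 ∈ D) (hnD : n ∈ D) (hn : 2 ≤ n) :
    ∑ K ∈ (Finset.Icc 1 n).powerset, psi n D U w zn K =
      (∑ S ∈ U.powerset, psi n D U w zn (DabF D 0 (n+1) ∪ S))
      + (∑ S ∈ U.powerset, psi n D U w zn (DabF D 0 n ∪ S))
      + (∑ S ∈ U.powerset, psi n D U w zn (DabF D 1 (n+1) ∪ S))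
      + (∑ S ∈ U.powerset, psi n D U w zn (DabF D 1 n ∪ S)) := by
  classical
  have hU : U ⊆ Finset.Icc 1 n := hDU ▸ Finset.subset_union_right
  have hD : D ⊆ Finset.Icc 1 n := hDU ▸ Finset.subset_union_left
  set P : Finset (ℕ × ℕ) := insert (0, n+1) (insert (0, n) (insert (1, n+1) {(1, n)})) with hP
  have hmemP : ∀ q ∈ P, (q.1 = 0 ∨ q.1 = 1) ∧ (q.2 = n ∨ q.2 = n + 1) := by
    intro q hq
    simp only [hP, Finset.mem_insert, Finset.mem_singleton] at hq
    rcases hq with rfl | rfl | rfl | rfl <;> simp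
  have key : ∑ K ∈ (Finset.Icc 1 n).powerset, psi n D U w zn K =
      ∑ q ∈ P, ∑ S ∈ U.powerset, psi n D U w zn (DabF D q.1 q.2 ∪ S) := by
    rw [← Finset.sum_product']
    have hL : ∑ K ∈ (Finset.Icc 1 n).powerset, psi n D U w zn K =
        ∑ K ∈ (Finset.Icc 1 n).powerset.filter
          (fun K => IsNested n D K ∧ K ∪ bad n D U K = Finset.Icc 1 n), psi n D U w zn K := by
      rw [Finset.sum_filter_of_ne]
      intro K hK hne
      by_contra hcond
      apply hne
      rw [psi, if_neg hcond, zero_mul]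
    have hR : ∑ qS ∈ P ×ˢ U.powerset, psi n D U w zn (DabF D qS.1.1 qS.1.2 ∪ qS.2) =
        ∑ qS ∈ (P ×ˢ U.powerset).filter (fun qS => (DabF D qS.1.1 qS.1.2 ∪ qS.2).Nonempty),
          psi n D U w zn (DabF D qS.1.1 qS.1.2 ∪ qS.2) := by
      rw [Finset.sum_filter_of_ne]
      intro qS hqS hne
      by_contra hcond
      apply hne
      rw [psi, if_neg, zero_mul]
      rintro ⟨hnest, _⟩
      exact hcond hnest.1
    rw [hL, hR]
    refine Finset.sum_nbij' (fun K => ((aI D K, bI n D K), K ∩ U))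
      (fun qS => DabF D qS.1.1 qS.1.2 ∪ qS.2) ?_ ?_ ?_ ?_ ?_
    · -- maps into filtered product
      intro K hK
      rw [Finset.mem_filter] at hK
      obtain ⟨hKpow, hnest, hfull⟩ := hK
      obtain ⟨haK, hbK, hrecomp⟩ := recomp hDU hdisj h1D hnD hn hnest hfull
      rw [Finset.mem_filter]
      constructor
      · rw [Finset.mem_product]
        constructor
        · simp only [hP, Finset.mem_insert, Finset.mem_singleton, Prod.mk.injEq]
          rcases haK with h1 | h1 <;> rcases hbK with h2 | h2 <;> simp [h1, h2]
        · exact Finset.mem_powerset.mpr Finset.inter_subset_right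
      · exact hrecomp ▸ hnest.1
    · -- inverse maps into filtered powerset
      intro qS hqS
      rw [Finset.mem_filter] at hqS
      obtain ⟨hqSmem, hne⟩ := hqS
      rw [Finset.mem_product] at hqSmem
      obtain ⟨hq, hSpow⟩ := hqSmem
      have hS := Finset.mem_powerset.mp hSpow
      obtain ⟨ha, hb⟩ := hmemP _ hq
      have ha' : qS.1.1 = 0 ∨ qS.1.1 = 1 := ha
      obtain ⟨hnest, _, _, hfull⟩ := sandwich_props hDU hdisj h1D hnD hn ha' hb hS hne
      rw [Finset.mem_filter]
      exact ⟨Finset.mem_powerset.mpr hnest.2.1, hnest, hfull⟩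
    · -- left inverse
      intro K hK
      rw [Finset.mem_filter] at hK
      obtain ⟨hKpow, hnest, hfull⟩ := hK
      obtain ⟨haK, hbK, hrecomp⟩ := recomp hDU hdisj h1D hnD hn hnest hfull
      exact hrecomp.symm
    · -- right inverse
      intro qS hqS
      rw [Finset.mem_filter] at hqS
      obtain ⟨hqSmem, hne⟩ := hqS
      rw [Finset.mem_product] at hqSmem
      obtain ⟨hq, hSpow⟩ := hqSmem
      have hS := Finset.mem_powerset.mp hSpow
      obtain ⟨ha, hb⟩ := hmemP _ hq
      obtain ⟨hnest, haK, hbK, hfull⟩ := sandwich_props hDU hdisj h1D hnD hn ha hb hS hne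
      have hSU : (DabF D qS.1.1 qS.1.2 ∪ qS.2) ∩ U = qS.2 := by
        rw [Finset.union_inter_distrib_right]
        have h1 : DabF D qS.1.1 qS.1.2 ∩ U = ∅ := by
          rw [← Finset.disjoint_iff_inter_eq_empty]
          exact Finset.disjoint_of_subset_left (Finset.filter_subset _ _) hdisj
        have h2 : qS.2 ∩ U = qS.2 := Finset.inter_eq_left.mpr hS
        rw [h1, h2, Finset.empty_union]
      show ((aI D (DabF D qS.1.1 qS.1.2 ∪ qS.2), bI n D (DabF D qS.1.1 qS.1.2 ∪ qS.2)),
        (DabF D qS.1.1 qS.1.2 ∪ qS.2) ∩ U) = qS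
      rw [haK, hbK, hSU]
    · -- summand equality
      intro K hK
      rw [Finset.mem_filter] at hK
      obtain ⟨hKpow, hnest, hfull⟩ := hK
      obtain ⟨haK, hbK, hrecomp⟩ := recomp hDU hdisj h1D hnD hn hnest hfull
      rw [← hrecomp]
  rw [key, hP]
  rw [Finset.sum_insert (by simp), Finset.sum_insert (by simp),
    Finset.sum_insert (by simp), Finset.sum_singleton]
  ring

end Step2
section PartEval

variable {n : ℕ} {D U : Finset ℕ} {w : ℕ × ℕ → ℝ} {zn : ℝ}

lemma WJ_indicator (hDU : D ∪ U = Finset.Icc 1 n) (hdisj : Disjoint D U)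
    (h1D : 1 ∈ D) (hnD : n ∈ D) (hn : 2 ≤ n)
    {a b : ℕ} (ha : a = 0 ∨ a = 1) (hb : b = n ∨ b = n + 1)
    (himp : DabF D a b = ∅ → ¬ IsProper n D U a b)
    (p : ℕ × ℕ) {S : Finset ℕ} (hS : S ⊆ U) :
    ((DabF D a b ∪ S).Nonempty ∧ p ∈ WJ n D U (DabF D a b ∪ S)) ↔
      (IsProper n D U p.1 p.2 ∧ (p.1 = a ∨ p.1 ∈ U) ∧ (p.2 = b ∨ p.2 ∈ U) ∧
        ((U.filter fun u => u = p.1 ∨ u = p.2) ⊆ S ∧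
          Disjoint S (U.filter fun u => p.1 < u ∧ u < p.2))) := by
  classical
  have hu2 := U_bounds hDU hdisj h1D hnD
  have ha' := ha_mem h1D ha
  have hb' := hb_mem hnD hb
  have ha1 : a ≤ 1 := by omega
  have hbn : n ≤ b := by omega
  have haU : a ∉ U := fun h => by have := hu2 a h; omega
  have hbU : b ∉ U := fun h => by have := hu2 b h; omega
  have hKdef : DabF D a b ∪ S = (D.filter fun d => a < d ∧ d < b) ∪ S := rfl
  constructor
  · rintro ⟨hne, hpW⟩
    rw [mem_WJ_iff hDU hdisj h1D hnD ha' ha1 hb' hbn hS hKdef hne p] at hpW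
    obtain ⟨hprop, hx, hy, hbtw⟩ := hpW
    refine ⟨hprop, ?_, ?_, ?_, ?_⟩
    · exact hx.imp id (fun h => hS h)
    · exact hy.imp id (fun h => hS h)
    · intro u hu
      rw [Finset.mem_filter] at hu
      obtain ⟨huU, hu2'⟩ := hu
      rcases hu2' with rfl | rfl
      · rcases hx with h | h
        · exact absurd (h ▸ huU) haU
        · exact h
      · rcases hy with h | h
        · exact absurd (h ▸ huU) hbU
        · exact h
    · rw [Finset.disjoint_right]
      intro u hu huS
      rw [Finset.mem_filter] at hu
      exact hbtw u huS hu.2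
  · rintro ⟨hprop, hx, hy, hAp, hCp⟩
    have hxS : p.1 = a ∨ p.1 ∈ S := by
      rcases hx with h | h
      · exact Or.inl h
      · exact Or.inr (hAp (Finset.mem_filter.mpr ⟨h, Or.inl rfl⟩))
    have hyS : p.2 = b ∨ p.2 ∈ S := by
      rcases hy with h | h
      · exact Or.inl h
      · exact Or.inr (hAp (Finset.mem_filter.mpr ⟨h, Or.inr rfl⟩))
    have hne : (DabF D a b ∪ S).Nonempty := by
      rw [Finset.nonempty_iff_ne_empty]
      intro hemp
      have hD0 : DabF D a b = ∅ := by
        have := Finset.union_eq_empty.mp hemp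
        exact this.1
      have hS0 : S = ∅ := (Finset.union_eq_empty.mp hemp).2
      subst hS0
      have hxa : p.1 = a := by
        rcases hx with h | h
        · exact h
        · exact absurd (hAp (Finset.mem_filter.mpr ⟨h, Or.inl rfl⟩)) (Finset.notMem_empty _)
      have hyb : p.2 = b := by
        rcases hy with h | h
        · exact h
        · exact absurd (hAp (Finset.mem_filter.mpr ⟨h, Or.inr rfl⟩)) (Finset.notMem_empty _)
      exact himp hD0 (hxa ▸ hyb ▸ hprop)
    refine ⟨hne, ?_⟩
    rw [mem_WJ_iff hDU hdisj h1D hnD ha' ha1 hb' hbn hS hKdef hne p]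
    refine ⟨hprop, hxS, hyS, ?_⟩
    intro u huS hbet
    have : u ∈ U.filter fun u => p.1 < u ∧ u < p.2 :=
      Finset.mem_filter.mpr ⟨hS huS, hbet⟩
    exact Finset.disjoint_left.mp hCp huS this

lemma Zp_eval (hDU : D ∪ U = Finset.Icc 1 n) (hdisj : Disjoint D U)
    (h1D : 1 ∈ D) (hnD : n ∈ D) (hn : 2 ≤ n)
    {a b : ℕ} (ha : a = 0 ∨ a = 1) (hb : b = n ∨ b = n + 1)
    (himp : DabF D a b = ∅ → ¬ IsProper n D U a b) (p : ℕ × ℕ) :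
    ∑ S ∈ U.powerset, (-1:ℝ)^S.card *
        (if (DabF D a b ∪ S).Nonempty ∧ p ∈ WJ n D U (DabF D a b ∪ S) then 1 else 0)
      = if IsProper n D U p.1 p.2 ∧ (p.1 = a ∨ p.1 ∈ U) ∧ (p.2 = b ∨ p.2 ∈ U) ∧
            (U.filter fun u => u = p.1 ∨ u = p.2) ∪ (U.filter fun u => p.1 < u ∧ u < p.2) = U
        then (-1:ℝ)^((U.filter fun u => u = p.1 ∨ u = p.2).card) else 0 := by
  classical
  have hstep : ∀ S ∈ U.powerset, (-1:ℝ)^S.card *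
        (if (DabF D a b ∪ S).Nonempty ∧ p ∈ WJ n D U (DabF D a b ∪ S) then 1 else 0)
      = (-1:ℝ)^S.card *
        (if (IsProper n D U p.1 p.2 ∧ (p.1 = a ∨ p.1 ∈ U) ∧ (p.2 = b ∨ p.2 ∈ U)) ∧
            ((U.filter fun u => u = p.1 ∨ u = p.2) ⊆ S ∧
              Disjoint S (U.filter fun u => p.1 < u ∧ u < p.2)) then 1 else 0) := by
    intro S hS
    congr 1
    refine if_congr ?_ rfl rfl
    rw [WJ_indicator hDU hdisj h1D hnD hn ha hb himp p (Finset.mem_powerset.mp hS)]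
    tauto
  rw [Finset.sum_congr rfl hstep]
  by_cases hP : IsProper n D U p.1 p.2 ∧ (p.1 = a ∨ p.1 ∈ U) ∧ (p.2 = b ∨ p.2 ∈ U)
  · have hred : ∀ S ∈ U.powerset, (-1:ℝ)^S.card *
        (if (IsProper n D U p.1 p.2 ∧ (p.1 = a ∨ p.1 ∈ U) ∧ (p.2 = b ∨ p.2 ∈ U)) ∧
            ((U.filter fun u => u = p.1 ∨ u = p.2) ⊆ S ∧
              Disjoint S (U.filter fun u => p.1 < u ∧ u < p.2)) then 1 else 0)
        = (-1:ℝ)^S.card *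
          (if (U.filter fun u => u = p.1 ∨ u = p.2) ⊆ S ∧
              Disjoint S (U.filter fun u => p.1 < u ∧ u < p.2) then 1 else 0) := by
      intro S _
      congr 1
      refine if_congr ?_ rfl rfl
      simp [hP]
    rw [Finset.sum_congr rfl hred]
    rw [cube_sum U _ _ (Finset.filter_subset _ _) (Finset.filter_subset _ _) ?hd]
    case hd =>
      rw [Finset.disjoint_left]
      intro u hu1 hu2
      rw [Finset.mem_filter] at hu1 hu2
      have h1 := hP.1.1
      rcases hu1.2 with rfl | rfl
      · omega
      · omega
    split
    · next h => rw [if_pos ⟨hP.1, hP.2.1, hP.2.2, h⟩]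
    · next h => rw [if_neg (fun hh => h hh.2.2.2)]
  · have hred : ∀ S ∈ U.powerset, (-1:ℝ)^S.card *
        (if (IsProper n D U p.1 p.2 ∧ (p.1 = a ∨ p.1 ∈ U) ∧ (p.2 = b ∨ p.2 ∈ U)) ∧
            ((U.filter fun u => u = p.1 ∨ u = p.2) ⊆ S ∧
              Disjoint S (U.filter fun u => p.1 < u ∧ u < p.2)) then 1 else 0) = 0 := by
      intro S _
      rw [if_neg (fun hc => hP hc.1), mul_zero]
    rw [Finset.sum_congr rfl hred, Finset.sum_const, smul_zero,
      if_neg (fun hc => hP ⟨hc.1, hc.2.1, hc.2.2.1⟩)]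

end PartEval
section PartEval2

variable {n : ℕ} {D U : Finset ℕ} {w : ℕ × ℕ → ℝ} {zn : ℝ}

lemma part_eval (hDU : D ∪ U = Finset.Icc 1 n) (hdisj : Disjoint D U)
    (h1D : 1 ∈ D) (hnD : n ∈ D) (hn : 2 ≤ n)
    {a b : ℕ} (ha : a = 0 ∨ a = 1) (hb : b = n ∨ b = n + 1)
    (himp : DabF D a b = ∅ → ¬ IsProper n D U a b) :
    ∑ S ∈ U.powerset, psi n D U w zn (DabF D a b ∪ S) =
      (-1:ℝ)^(n - (DabF D a b).card) *
        ( ((if U = ∅ then (1:ℝ) else 0) - (if DabF D a b = ∅ then (1:ℝ) else 0)) * zn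
          + (if IsProper n D U a b then w (a,b) - zn else 0)
          - (if U.Nonempty ∧ IsProper n D U a (maxEl U) then w (a, maxEl U) - zn else 0)
          - (if U.Nonempty ∧ IsProper n D U (minEl U) b then w (minEl U, b) - zn else 0)
          + (if U.Nonempty ∧ IsProper n D U (minEl U) (maxEl U)
              then w (minEl U, maxEl U) - zn else 0) ) := by
  classical
  have hD : D ⊆ Finset.Icc 1 n := hDU ▸ Finset.subset_union_left
  have hU : U ⊆ Finset.Icc 1 n := hDU ▸ Finset.subset_union_right
  have hu2 := U_bounds hDU hdisj h1D hnD
  have hUoo : ∀ u ∈ U, a < u ∧ u < b := by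
    intro u hu; have := hu2 u hu; rcases ha with rfl | rfl <;> rcases hb with rfl | rfl <;> omega
  have hIccCard : (Finset.Icc 1 n).card = n := by rw [Nat.card_Icc]; omega
  have hDUcard : D.card + U.card = n := by
    rw [← Finset.card_union_of_disjoint hdisj, hDU, hIccCard]
  have hDabD : DabF D a b ⊆ D := Finset.filter_subset _ _
  have hsummand : ∀ S ∈ U.powerset, psi n D U w zn (DabF D a b ∪ S) =
      (-1:ℝ)^(n - (DabF D a b).card) * ((-1:ℝ)^S.card *
        ((if (DabF D a b ∪ S).Nonempty then zn else 0) +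
         ∑ p ∈ Finset.range (n+2) ×ˢ Finset.range (n+2),
           (if (DabF D a b ∪ S).Nonempty ∧ p ∈ WJ n D U (DabF D a b ∪ S)
             then w p - zn else 0))) := by
    intro S hSpow
    have hS := Finset.mem_powerset.mp hSpow
    by_cases hne : (DabF D a b ∪ S).Nonempty
    · obtain ⟨hnest, haK, hbK, hfull⟩ := sandwich_props hDU hdisj h1D hnD hn ha hb hS hne
      rw [psi, if_pos ⟨hnest, hfull⟩]
      have hcardK : (DabF D a b ∪ S).card = (DabF D a b).card + S.card :=
        Finset.card_union_of_disjoint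
          (Finset.disjoint_of_subset_left hDabD (Finset.disjoint_of_subset_right hS hdisj))
      have hsd : (Finset.Icc 1 n \ (DabF D a b ∪ S)).card
          = (n - (DabF D a b).card) - S.card := by
        rw [Finset.card_sdiff_of_subset hnest.2.1, hIccCard, hcardK, Nat.sub_sub]
      have hSle : S.card ≤ n - (DabF D a b).card := by
        have h1 := Finset.card_le_card hS
        have h2 := Finset.card_le_card hDabD
        omega
      rw [hsd, neg_one_pow_sub _ _ hSle]
      have hWJsub : WJ n D U (DabF D a b ∪ S) ⊆ Finset.range (n+2) ×ˢ Finset.range (n+2) := by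
        rw [WJ]; exact Finset.filter_subset _ _
      have hsum : ∑ p ∈ Finset.range (n+2) ×ˢ Finset.range (n+2),
          (if (DabF D a b ∪ S).Nonempty ∧ p ∈ WJ n D U (DabF D a b ∪ S)
            then w p - zn else 0)
          = ∑ p ∈ WJ n D U (DabF D a b ∪ S), (w p - zn) := by
        simp only [hne, true_and]
        rw [Finset.sum_ite_mem, Finset.inter_eq_right.mpr hWJsub]
      rw [hsum, if_pos hne, gW]
      have hsub2 : ∑ p ∈ WJ n D U (DabF D a b ∪ S), (w p - zn)
          = (∑ p ∈ WJ n D U (DabF D a b ∪ S), w p)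
            - ((WJ n D U (DabF D a b ∪ S)).card : ℝ) * zn := by
        rw [Finset.sum_sub_distrib, Finset.sum_const, nsmul_eq_mul]
      rw [hsub2]
      ring
    · rw [psi, if_neg, zero_mul]
      · simp [hne]
      · rintro ⟨hnest, _⟩; exact hne hnest.1
  rw [Finset.sum_congr rfl hsummand, ← Finset.mul_sum]
  congr 1
  have hsplit : ∑ S ∈ U.powerset, ((-1:ℝ)^S.card *
        ((if (DabF D a b ∪ S).Nonempty then zn else 0) +
         ∑ p ∈ Finset.range (n+2) ×ˢ Finset.range (n+2),
           (if (DabF D a b ∪ S).Nonempty ∧ p ∈ WJ n D U (DabF D a b ∪ S)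
             then w p - zn else 0)))
      = (∑ S ∈ U.powerset, (-1:ℝ)^S.card *
          (if (DabF D a b ∪ S).Nonempty then zn else 0))
        + ∑ S ∈ U.powerset, (-1:ℝ)^S.card *
            ∑ p ∈ Finset.range (n+2) ×ˢ Finset.range (n+2),
              (if (DabF D a b ∪ S).Nonempty ∧ p ∈ WJ n D U (DabF D a b ∪ S)
                then w p - zn else 0) := by
    rw [← Finset.sum_add_distrib]
    exact Finset.sum_congr rfl fun S _ => by ring
  rw [hsplit]
  -- T0 evaluation
  have hT0 : (∑ S ∈ U.powerset, (-1:ℝ)^S.card *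
        (if (DabF D a b ∪ S).Nonempty then zn else 0))
      = ((if U = ∅ then (1:ℝ) else 0) - (if DabF D a b = ∅ then (1:ℝ) else 0)) * zn := by
    by_cases hDab : DabF D a b = ∅
    · have hterm : ∀ S ∈ U.powerset, (-1:ℝ)^S.card *
          (if (DabF D a b ∪ S).Nonempty then zn else 0)
          = (-1:ℝ)^S.card * zn - (if S = ∅ then zn else 0) := by
        intro S _
        rw [hDab, Finset.empty_union]
        by_cases hS0 : S = ∅
        · subst hS0; simp
        · rw [if_pos (Finset.nonempty_iff_ne_empty.mpr hS0), if_neg hS0, sub_zero]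
      rw [Finset.sum_congr rfl hterm, Finset.sum_sub_distrib]
      have h1 : ∑ S ∈ U.powerset, (-1:ℝ)^S.card * zn
          = (if U = ∅ then (1:ℝ) else 0) * zn := by
        rw [← Finset.sum_mul, neg_one_pow_sum]
      have h2 : ∑ S ∈ U.powerset, (if S = ∅ then zn else 0) = zn := by
        rw [Finset.sum_ite_eq' U.powerset (∅ : Finset ℕ) (fun _ => zn)]
        rw [if_pos (Finset.empty_mem_powerset U)]
      rw [h1, h2, if_pos hDab]
      ring
    · have hterm : ∀ S ∈ U.powerset, (-1:ℝ)^S.card *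
          (if (DabF D a b ∪ S).Nonempty then zn else 0) = (-1:ℝ)^S.card * zn := by
        intro S _
        rw [if_pos (Finset.Nonempty.mono Finset.subset_union_left
          (Finset.nonempty_iff_ne_empty.mpr hDab))]
      rw [Finset.sum_congr rfl hterm, ← Finset.sum_mul, neg_one_pow_sum, if_neg hDab]
      ring
  rw [hT0]
  -- T1 evaluation
  have hswap : ∑ S ∈ U.powerset, (-1:ℝ)^S.card *
        ∑ p ∈ Finset.range (n+2) ×ˢ Finset.range (n+2),
          (if (DabF D a b ∪ S).Nonempty ∧ p ∈ WJ n D U (DabF D a b ∪ S)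
            then w p - zn else 0)
      = ∑ p ∈ Finset.range (n+2) ×ˢ Finset.range (n+2), (w p - zn) *
          (if IsProper n D U p.1 p.2 ∧ (p.1 = a ∨ p.1 ∈ U) ∧ (p.2 = b ∨ p.2 ∈ U) ∧
              (U.filter fun u => u = p.1 ∨ u = p.2) ∪ (U.filter fun u => p.1 < u ∧ u < p.2) = U
            then (-1:ℝ)^((U.filter fun u => u = p.1 ∨ u = p.2).card) else 0) := by
    have e1 : ∀ S ∈ U.powerset, (-1:ℝ)^S.card *
          ∑ p ∈ Finset.range (n+2) ×ˢ Finset.range (n+2),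
            (if (DabF D a b ∪ S).Nonempty ∧ p ∈ WJ n D U (DabF D a b ∪ S)
              then w p - zn else 0)
        = ∑ p ∈ Finset.range (n+2) ×ˢ Finset.range (n+2), (w p - zn) *
            ((-1:ℝ)^S.card *
              (if (DabF D a b ∪ S).Nonempty ∧ p ∈ WJ n D U (DabF D a b ∪ S)
                then 1 else 0)) := by
      intro S _
      rw [Finset.mul_sum]
      exact Finset.sum_congr rfl fun p _ => by split_ifs <;> ring
    rw [Finset.sum_congr rfl e1, Finset.sum_comm]
    refine Finset.sum_congr rfl fun p _ => ?_
    rw [← Finset.mul_sum, Zp_eval hDU hdisj h1D hnD hn ha hb himp p]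
  rw [hswap]
  -- now evaluate the p-sum
  by_cases hUne : U.Nonempty
  · -- main case
    obtain ⟨u0, hu0⟩ := hUne
    have hUne : U.Nonempty := ⟨u0, hu0⟩
    have hμU : minEl U ∈ U := by
      have := Nat.sInf_mem (s := {i : ℕ | i ∈ U}) ⟨u0, hu0⟩
      exact this
    have hμle : ∀ u ∈ U, minEl U ≤ u := fun u hu => Nat.sInf_le hu
    have hMU : maxEl U ∈ U := by
      obtain ⟨m, hm, he⟩ := Finset.exists_mem_eq_sup U ⟨u0, hu0⟩ id
      rw [maxEl, he]; exact hm
    have hleM : ∀ u ∈ U, u ≤ maxEl U := fun u hu => Finset.le_sup (f := id) hu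
    have hμ2 : 2 ≤ minEl U := (hu2 _ hμU).1
    have hμn : minEl U + 1 ≤ n := (hu2 _ hμU).2
    have hM2 : 2 ≤ maxEl U := (hu2 _ hMU).1
    have hMn : maxEl U + 1 ≤ n := (hu2 _ hMU).2
    have hab1 : a ≤ 1 := by omega
    have hbn : n ≤ b := by omega
    have hbn1 : b ≤ n + 1 := by omega
    set μ := minEl U
    set M := maxEl U
    set Pts : Finset (ℕ × ℕ) := insert (a,b) (insert (a,M) (insert (μ,b) {(μ,M)})) with hPts
    have hPtsSub : Pts ⊆ Finset.range (n+2) ×ˢ Finset.range (n+2) := by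
      intro p hp
      simp only [hPts, Finset.mem_insert, Finset.mem_singleton] at hp
      rw [Finset.mem_product, Finset.mem_range, Finset.mem_range]
      rcases hp with rfl | rfl | rfl | rfl <;> constructor <;> simp <;> omega
    have hvanish : ∀ p ∈ Finset.range (n+2) ×ˢ Finset.range (n+2), p ∉ Pts →
        (w p - zn) * (if IsProper n D U p.1 p.2 ∧ (p.1 = a ∨ p.1 ∈ U) ∧ (p.2 = b ∨ p.2 ∈ U) ∧
            (U.filter fun u => u = p.1 ∨ u = p.2) ∪ (U.filter fun u => p.1 < u ∧ u < p.2) = U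
          then (-1:ℝ)^((U.filter fun u => u = p.1 ∨ u = p.2).card) else 0) = 0 := by
      intro p hp hnp
      rw [if_neg, mul_zero]
      rintro ⟨hprop, hx, hy, hcov⟩
      apply hnp
      have hx' : p.1 = a ∨ p.1 = μ := by
        rcases hx with h | h
        · exact Or.inl h
        · refine Or.inr ?_
          have h1 : μ ≤ p.1 := hμle _ h
          have h2 : p.1 ≤ μ := by
            have hμcov : μ ∈ (U.filter fun u => u = p.1 ∨ u = p.2) ∪
                (U.filter fun u => p.1 < u ∧ u < p.2) := by rw [hcov]; exact hμU
            rcases Finset.mem_union.mp hμcov with hh | hh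
            · rcases (Finset.mem_filter.mp hh).2 with h3 | h3
              · omega
              · have := hprop.1; omega
            · have := (Finset.mem_filter.mp hh).2; omega
          omega
      have hy' : p.2 = b ∨ p.2 = M := by
        rcases hy with h | h
        · exact Or.inl h
        · refine Or.inr ?_
          have h1 : p.2 ≤ M := hleM _ h
          have h2 : M ≤ p.2 := by
            have hMcov : M ∈ (U.filter fun u => u = p.1 ∨ u = p.2) ∪
                (U.filter fun u => p.1 < u ∧ u < p.2) := by rw [hcov]; exact hMU
            rcases Finset.mem_union.mp hMcov with hh | hh
            · rcases (Finset.mem_filter.mp hh).2 with h3 | h3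
              · have := hprop.1; omega
              · omega
            · have := (Finset.mem_filter.mp hh).2; omega
          omega
      simp only [hPts, Finset.mem_insert, Finset.mem_singleton, Prod.ext_iff]
      rcases hx' with h1 | h1 <;> rcases hy' with h2 | h2 <;> simp [h1, h2]
    have hPsum := Finset.sum_subset hPtsSub hvanish
    rw [← hPsum]
    have d1 : (a,b) ∉ insert (a,M) (insert (μ,b) ({(μ,M)} : Finset (ℕ × ℕ))) := by
      simp only [Finset.mem_insert, Finset.mem_singleton, Prod.ext_iff]
      push_neg
      refine ⟨fun _ => by omega, fun h => absurd h (by omega), fun h => absurd h (by omega)⟩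
    have d2 : (a,M) ∉ insert (μ,b) ({(μ,M)} : Finset (ℕ × ℕ)) := by
      simp only [Finset.mem_insert, Finset.mem_singleton, Prod.ext_iff]
      push_neg
      refine ⟨fun h => absurd h (by omega), fun h => absurd h (by omega)⟩
    have d3 : (μ,b) ∉ ({(μ,M)} : Finset (ℕ × ℕ)) := by
      simp only [Finset.mem_singleton, Prod.ext_iff]
      push_neg
      intro _; omega
    rw [hPts, Finset.sum_insert d1, Finset.sum_insert d2, Finset.sum_insert d3,
      Finset.sum_singleton]
    -- evaluate the four values
    have haU : a ∉ U := fun h => by have := hu2 a h; omega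
    have hbU : b ∉ U := fun h => by have := hu2 b h; omega
    have e1 : (w (a,b) - zn) * (if IsProper n D U (a,b).1 (a,b).2 ∧
          ((a,b).1 = a ∨ (a,b).1 ∈ U) ∧ ((a,b).2 = b ∨ (a,b).2 ∈ U) ∧
          (U.filter fun u => u = (a,b).1 ∨ u = (a,b).2) ∪
            (U.filter fun u => (a,b).1 < u ∧ u < (a,b).2) = U
        then (-1:ℝ)^((U.filter fun u => u = (a,b).1 ∨ u = (a,b).2).card) else 0)
        = (if IsProper n D U a b then w (a,b) - zn else 0) := by
      have hA : (U.filter fun u => u = (a,b).1 ∨ u = (a,b).2) = ∅ := by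
        refine Finset.filter_false_of_mem ?_
        intro u hu
        have := hu2 u hu
        push_neg
        constructor <;> · simp only []; omega
      have hC : (U.filter fun u => (a,b).1 < u ∧ u < (a,b).2) = U := by
        refine Finset.filter_true_of_mem ?_
        intro u hu
        exact hUoo u hu
      rw [hA, hC, Finset.empty_union, Finset.card_empty, pow_zero]
      by_cases hprop : IsProper n D U a b
      · rw [if_pos ⟨hprop, Or.inl rfl, Or.inl rfl, rfl⟩, if_pos hprop]; ring
      · rw [if_neg (fun hc => hprop hc.1), if_neg hprop]; ring
    have e2 : (w (a,M) - zn) * (if IsProper n D U (a,M).1 (a,M).2 ∧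
          ((a,M).1 = a ∨ (a,M).1 ∈ U) ∧ ((a,M).2 = b ∨ (a,M).2 ∈ U) ∧
          (U.filter fun u => u = (a,M).1 ∨ u = (a,M).2) ∪
            (U.filter fun u => (a,M).1 < u ∧ u < (a,M).2) = U
        then (-1:ℝ)^((U.filter fun u => u = (a,M).1 ∨ u = (a,M).2).card) else 0)
        = -(if IsProper n D U a M then w (a,M) - zn else 0) := by
      have hA : (U.filter fun u => u = (a,M).1 ∨ u = (a,M).2) = {M} := by
        ext u
        rw [Finset.mem_filter, Finset.mem_singleton]
        constructor
        · rintro ⟨hu, h | h⟩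
          · have := hu2 u hu; omega
          · exact h
        · rintro rfl
          exact ⟨hMU, Or.inr rfl⟩
      have hC : ({M} : Finset ℕ) ∪ (U.filter fun u => (a,M).1 < u ∧ u < (a,M).2) = U := by
        apply Finset.Subset.antisymm
        · refine Finset.union_subset ?_ (Finset.filter_subset _ _)
          intro u hu
          rw [Finset.mem_singleton] at hu
          exact hu ▸ hMU
        · intro u hu
          rcases Nat.eq_or_lt_of_le (hleM u hu) with h | h
          · exact Finset.mem_union_left _ (Finset.mem_singleton.mpr h)
          · refine Finset.mem_union_right _ (Finset.mem_filter.mpr ⟨hu, ?_, h⟩)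
            have := hu2 u hu
            simp only []
            omega
      rw [hA, hC, Finset.card_singleton, pow_one]
      by_cases hprop : IsProper n D U a M
      · rw [if_pos ⟨hprop, Or.inl rfl, Or.inr hMU, rfl⟩, if_pos hprop]; ring
      · rw [if_neg (fun hc => hprop hc.1), if_neg hprop]; ring
    have e3 : (w (μ,b) - zn) * (if IsProper n D U (μ,b).1 (μ,b).2 ∧
          ((μ,b).1 = a ∨ (μ,b).1 ∈ U) ∧ ((μ,b).2 = b ∨ (μ,b).2 ∈ U) ∧
          (U.filter fun u => u = (μ,b).1 ∨ u = (μ,b).2) ∪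
            (U.filter fun u => (μ,b).1 < u ∧ u < (μ,b).2) = U
        then (-1:ℝ)^((U.filter fun u => u = (μ,b).1 ∨ u = (μ,b).2).card) else 0)
        = -(if IsProper n D U μ b then w (μ,b) - zn else 0) := by
      have hA : (U.filter fun u => u = (μ,b).1 ∨ u = (μ,b).2) = {μ} := by
        ext u
        rw [Finset.mem_filter, Finset.mem_singleton]
        constructor
        · rintro ⟨hu, h | h⟩
          · exact h
          · have := hu2 u hu; omega
        · rintro rfl
          exact ⟨hμU, Or.inl rfl⟩
      have hC : ({μ} : Finset ℕ) ∪ (U.filter fun u => (μ,b).1 < u ∧ u < (μ,b).2) = U := by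
        apply Finset.Subset.antisymm
        · refine Finset.union_subset ?_ (Finset.filter_subset _ _)
          intro u hu
          rw [Finset.mem_singleton] at hu
          exact hu ▸ hμU
        · intro u hu
          rcases Nat.eq_or_lt_of_le (hμle u hu) with h | h
          · exact Finset.mem_union_left _ (Finset.mem_singleton.mpr h.symm)
          · refine Finset.mem_union_right _ (Finset.mem_filter.mpr ⟨hu, h, ?_⟩)
            have := hu2 u hu
            simp only []
            omega
      rw [hA, hC, Finset.card_singleton, pow_one]
      by_cases hprop : IsProper n D U μ b
      · rw [if_pos ⟨hprop, Or.inr hμU, Or.inl rfl, rfl⟩, if_pos hprop]; ring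
      · rw [if_neg (fun hc => hprop hc.1), if_neg hprop]; ring
    have e4 : (w (μ,M) - zn) * (if IsProper n D U (μ,M).1 (μ,M).2 ∧
          ((μ,M).1 = a ∨ (μ,M).1 ∈ U) ∧ ((μ,M).2 = b ∨ (μ,M).2 ∈ U) ∧
          (U.filter fun u => u = (μ,M).1 ∨ u = (μ,M).2) ∪
            (U.filter fun u => (μ,M).1 < u ∧ u < (μ,M).2) = U
        then (-1:ℝ)^((U.filter fun u => u = (μ,M).1 ∨ u = (μ,M).2).card) else 0)
        = (if IsProper n D U μ M then w (μ,M) - zn else 0) := by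
      by_cases hprop : IsProper n D U μ M
      · have hμM : μ < M := hprop.1
        have hA : (U.filter fun u => u = (μ,M).1 ∨ u = (μ,M).2) = insert μ {M} := by
          ext u
          rw [Finset.mem_filter, Finset.mem_insert, Finset.mem_singleton]
          constructor
          · rintro ⟨hu, h | h⟩
            · exact Or.inl h
            · exact Or.inr h
          · rintro (rfl | rfl)
            · exact ⟨hμU, Or.inl rfl⟩
            · exact ⟨hMU, Or.inr rfl⟩
        have hC : (insert μ ({M} : Finset ℕ)) ∪
            (U.filter fun u => (μ,M).1 < u ∧ u < (μ,M).2) = U := by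
          apply Finset.Subset.antisymm
          · refine Finset.union_subset ?_ (Finset.filter_subset _ _)
            intro u hu
            rcases Finset.mem_insert.mp hu with rfl | hu
            · exact hμU
            · exact (Finset.mem_singleton.mp hu) ▸ hMU
          · intro u hu
            have h1 := hμle u hu
            have h2 := hleM u hu
            rcases Nat.eq_or_lt_of_le h1 with h | h
            · exact Finset.mem_union_left _ (Finset.mem_insert.mpr (Or.inl h.symm))
            · rcases Nat.eq_or_lt_of_le h2 with h' | h'
              · exact Finset.mem_union_left _
                  (Finset.mem_insert.mpr (Or.inr (Finset.mem_singleton.mpr h')))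
              · exact Finset.mem_union_right _ (Finset.mem_filter.mpr ⟨hu, h, h'⟩)
        have hcard2 : (insert μ ({M} : Finset ℕ)).card = 2 := by
          rw [Finset.card_insert_of_notMem (by rw [Finset.mem_singleton]; omega),
            Finset.card_singleton]
        rw [hA, hC, hcard2]
        rw [if_pos ⟨hprop, Or.inr hμU, Or.inr hMU, rfl⟩, if_pos hprop]
        norm_num
      · rw [if_neg (fun hc => hprop hc.1), if_neg hprop, mul_zero]
    rw [e1, e2, e3, e4]
    simp only [hUne, true_and]
    ring
  · -- U = ∅ case
    have hUe : U = ∅ := Finset.not_nonempty_iff_eq_empty.mp hUne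
    subst hUe
    have hprod : ∀ p ∈ Finset.range (n+2) ×ˢ Finset.range (n+2),
        (w p - zn) * (if IsProper n D (∅ : Finset ℕ) p.1 p.2 ∧
            (p.1 = a ∨ p.1 ∈ (∅ : Finset ℕ)) ∧ (p.2 = b ∨ p.2 ∈ (∅ : Finset ℕ)) ∧
            ((∅ : Finset ℕ).filter fun u => u = p.1 ∨ u = p.2) ∪
              ((∅ : Finset ℕ).filter fun u => p.1 < u ∧ u < p.2) = (∅ : Finset ℕ)
          then (-1:ℝ)^(((∅ : Finset ℕ).filter fun u => u = p.1 ∨ u = p.2).card) else 0)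
        = (if p = (a, b) then (if IsProper n D (∅ : Finset ℕ) a b then w p - zn else 0)
            else 0) := by
      intro p _
      simp only [Finset.filter_empty, Finset.empty_union, Finset.card_empty, pow_zero,
        Finset.notMem_empty, or_false]
      by_cases hpe : p = (a, b)
      · subst hpe
        simp only [if_pos rfl]
        split_ifs with h1 h2 h2
        · ring
        · exact absurd h1.1 h2
        · exact absurd ⟨h2, by simp⟩ h1
        · ring
      · rw [if_neg hpe, if_neg, mul_zero]
        rintro ⟨_, h1, h2, _⟩
        exact hpe (Prod.ext h1 h2)
    rw [Finset.sum_congr rfl hprod, Finset.sum_ite_eq' _ (a, b) _]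
    rw [if_pos (Finset.mem_product.mpr ⟨Finset.mem_range.mpr (by omega), Finset.mem_range.mpr (by omega)⟩)]
    simp only [Finset.not_nonempty_empty, false_and, if_false]
    ring
end PartEval2
/-- for any right-hand sides,
`y_{[n]} = (−1)^{|[n]∖R_{δ_1}|}(z_{R_{δ_1}} − z_{R_{δ_2}} − z_{R_{δ_3}} + z_{R_{δ_4}})`
with `δ_1 = {0,n+1}`, `δ_2 = {0,n}`, `δ_3 = {1,n+1}`, `δ_4 = {1,n}` and the
extended `R` and `z`. -/
theorem statement13 (n : ℕ) (D U : Finset ℕ) (hn : 2 ≤ n)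
    (hDU : D ∪ U = Finset.Icc 1 n) (hdisj : Disjoint D U) (h1D : 1 ∈ D) (hnD : n ∈ D)
    (w : ℕ × ℕ → ℝ) (zn : ℝ) :
    yI n D U w zn (Finset.Icc 1 n) =
      (-1 : ℝ) ^ (Finset.Icc 1 n \ Rext n D U 0 (n + 1)).card *
        (zext n D U w zn 0 (n + 1) - zext n D U w zn 0 n
          - zext n D U w zn 1 (n + 1) + zext n D U w zn 1 n) := by
  classical
  have hD : D ⊆ Finset.Icc 1 n := hDU ▸ Finset.subset_union_left
  have hU : U ⊆ Finset.Icc 1 n := hDU ▸ Finset.subset_union_right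
  have hu2 := U_bounds hDU hdisj h1D hnD
  have hIccCard : (Finset.Icc 1 n).card = n := by rw [Nat.card_Icc]; omega
  have hDUcard : D.card + U.card = n := by
    rw [← Finset.card_union_of_disjoint hdisj, hDU, hIccCard]
  have hDmem : ∀ d ∈ D, 1 ≤ d ∧ d ≤ n := fun d hd => Finset.mem_Icc.mp (hD hd)
  have hDabF1 : DabF D 0 (n+1) = D := by
    refine Finset.filter_true_of_mem ?_
    intro d hd; have := hDmem d hd; omega
  have hDabF2 : DabF D 0 n = D.erase n := by
    ext d
    rw [DabF, Finset.mem_filter, Finset.mem_erase]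
    constructor
    · rintro ⟨hd, h1, h2⟩; exact ⟨by omega, hd⟩
    · rintro ⟨hne, hd⟩; have := hDmem d hd; exact ⟨hd, by omega, by omega⟩
  have hDabF3 : DabF D 1 (n+1) = D.erase 1 := by
    ext d
    rw [DabF, Finset.mem_filter, Finset.mem_erase]
    constructor
    · rintro ⟨hd, h1, h2⟩; exact ⟨by omega, hd⟩
    · rintro ⟨hne, hd⟩; have := hDmem d hd; exact ⟨hd, by omega, by omega⟩
  have hc1 : (DabF D 0 (n+1)).card = D.card := by rw [hDabF1]
  have hc2 : (DabF D 0 n).card = D.card - 1 := by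
    rw [hDabF2, Finset.card_erase_of_mem hnD]
  have hc3 : (DabF D 1 (n+1)).card = D.card - 1 := by
    rw [hDabF3, Finset.card_erase_of_mem h1D]
  have hDabF4 : DabF D 1 n = (D.erase 1).erase n := by
    ext d
    rw [DabF, Finset.mem_filter, Finset.mem_erase, Finset.mem_erase]
    constructor
    · rintro ⟨hd, h1, h2⟩; exact ⟨by omega, by omega, hd⟩
    · rintro ⟨hne1, hnen, hd⟩; have := hDmem d hd; exact ⟨hd, by omega, by omega⟩
  have hc4 : (DabF D 1 n).card = D.card - 2 := by
    rw [hDabF4, Finset.card_erase_of_mem (Finset.mem_erase.mpr ⟨by omega, hnD⟩),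
      Finset.card_erase_of_mem h1D]
    omega
  have hDcard2 : 2 ≤ D.card := by
    have hsub : ({1, n} : Finset ℕ) ⊆ D := by
      intro x hx
      rcases Finset.mem_insert.mp hx with rfl | hx
      · exact h1D
      · exact (Finset.mem_singleton.mp hx) ▸ hnD
    have hcard : ({1, n} : Finset ℕ).card = 2 := by
      rw [Finset.card_insert_of_notMem (by rw [Finset.mem_singleton]; omega),
        Finset.card_singleton]
    calc 2 = ({1, n} : Finset ℕ).card := hcard.symm
      _ ≤ D.card := Finset.card_le_card hsub
  have hDn : D.card ≤ n := hIccCard ▸ Finset.card_le_card hD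
  have hUcard : U.card = n - D.card := by omega
  have hne01 : DabF D 0 (n+1) ≠ ∅ := by
    intro h
    have : (1:ℕ) ∈ DabF D 0 (n+1) := Finset.mem_filter.mpr ⟨h1D, by omega, by omega⟩
    rw [h] at this
    exact Finset.notMem_empty _ this
  have hne02 : DabF D 0 n ≠ ∅ := by
    intro h
    have : (1:ℕ) ∈ DabF D 0 n := Finset.mem_filter.mpr ⟨h1D, by omega, by omega⟩
    rw [h] at this
    exact Finset.notMem_empty _ this
  have hne13 : DabF D 1 (n+1) ≠ ∅ := by
    intro h
    have : n ∈ DabF D 1 (n+1) := Finset.mem_filter.mpr ⟨hnD, by omega, by omega⟩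
    rw [h] at this
    exact Finset.notMem_empty _ this
  have himp1 : DabF D 0 (n+1) = ∅ → ¬ IsProper n D U 0 (n+1) := fun h => absurd h hne01
  have himp2 : DabF D 0 n = ∅ → ¬ IsProper n D U 0 n := fun h => absurd h hne02
  have himp3 : DabF D 1 (n+1) = ∅ → ¬ IsProper n D U 1 (n+1) := fun h => absurd h hne13
  have himp4 : DabF D 1 n = ∅ → ¬ IsProper n D U 1 n := fun h =>
    not_proper_1n hDU hdisj h1D hnD hn h
  rw [step1 hDU, step2 hDU hdisj h1D hnD hn,
    part_eval hDU hdisj h1D hnD hn (Or.inl rfl) (Or.inr rfl) himp1,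
    part_eval hDU hdisj h1D hnD hn (Or.inl rfl) (Or.inl rfl) himp2,
    part_eval hDU hdisj h1D hnD hn (Or.inr rfl) (Or.inr rfl) himp3,
    part_eval hDU hdisj h1D hnD hn (Or.inr rfl) (Or.inl rfl) himp4,
    hc1, hc2, hc3, hc4]
  have e2 : n - (D.card - 1) = (n - D.card) + 1 := by omega
  have e4 : n - (D.card - 2) = (n - D.card) + 2 := by omega
  rw [e2, e4]
  -- evaluate the proper-ness determined ifs and Rext/zext
  have hz2 : zext n D U w zn 0 n = w (0, n) := by
    rw [zext, if_pos (proper_0n hDU hdisj h1D hnD hn)]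
  have hz3 : zext n D U w zn 1 (n+1) = w (1, n+1) := by
    rw [zext, if_pos (proper_1n1 hDU hdisj h1D hnD hn)]
  have hq2 : (if IsProper n D U 0 n then w (0, n) - zn else 0) = w (0, n) - zn :=
    if_pos (proper_0n hDU hdisj h1D hnD hn)
  have hq3 : (if IsProper n D U 1 (n+1) then w (1, n+1) - zn else 0) = w (1, n+1) - zn :=
    if_pos (proper_1n1 hDU hdisj h1D hnD hn)
  have hi01 : (if DabF D 0 (n+1) = ∅ then (1:ℝ) else 0) = 0 := if_neg hne01
  have hi02 : (if DabF D 0 n = ∅ then (1:ℝ) else 0) = 0 := if_neg hne02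
  have hi13 : (if DabF D 1 (n+1) = ∅ then (1:ℝ) else 0) = 0 := if_neg hne13
  rw [hz2, hz3, hq2, hq3, hi01, hi02, hi13]
  by_cases hUe : U = ∅
  · -- U empty
    have hRe : Rext n D U 0 (n+1) = Finset.Icc 1 n := by
      rw [Rext, if_neg (not_proper_0n1 hUe), if_pos ⟨hUe, rfl, rfl⟩]
    have hz1 : zext n D U w zn 0 (n+1) = zn := by
      rw [zext, if_neg (not_proper_0n1 hUe), if_pos ⟨hUe, rfl, rfl⟩]
    have hq1 : (if IsProper n D U 0 (n+1) then w (0, n+1) - zn else 0) = 0 :=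
      if_neg (not_proper_0n1 hUe)
    have hDcn : D.card = n := by
      have : D = Finset.Icc 1 n := by rw [← hDU, hUe, Finset.union_empty]
      rw [this, hIccCard]
    have hsd : (Finset.Icc 1 n \ Rext n D U 0 (n+1)).card = 0 := by
      rw [hRe, Finset.sdiff_self, Finset.card_empty]
    have hiU : (if U = ∅ then (1:ℝ) else 0) = 1 := if_pos hUe
    rw [hsd, hz1, hq1, hiU, hDcn]
    by_cases hmid : DabF D 1 n = ∅
    · have hq4 : (if IsProper n D U 1 n then w (1, n) - zn else 0) = 0 :=
        if_neg (not_proper_1n hDU hdisj h1D hnD hn hmid)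
      have hz4 : zext n D U w zn 1 n = 0 := by
        rw [zext, if_neg (not_proper_1n hDU hdisj h1D hnD hn hmid),
          if_neg (by rintro ⟨_, h, _⟩; omega),
          if_neg (by rintro (h | h)
                     · exact Finset.disjoint_left.mp hdisj h1D h
                     · exact Finset.disjoint_left.mp hdisj hnD h)]
      have hi4 : (if DabF D 1 n = ∅ then (1:ℝ) else 0) = 1 := if_pos hmid
      rw [hq4, hz4, hi4]
      simp only [Nat.sub_self, pow_zero]
      ring
    · have hq4 : (if IsProper n D U 1 n then w (1, n) - zn else 0) = w (1, n) - zn :=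
        if_pos (proper_1n hDU hdisj h1D hnD hn (Finset.nonempty_iff_ne_empty.mpr hmid))
      have hz4 : zext n D U w zn 1 n = w (1, n) := by
        rw [zext, if_pos (proper_1n hDU hdisj h1D hnD hn (Finset.nonempty_iff_ne_empty.mpr hmid))]
      have hi4 : (if DabF D 1 n = ∅ then (1:ℝ) else 0) = 0 := if_neg hmid
      rw [hq4, hz4, hi4]
      simp only [Nat.sub_self, pow_zero]
      ring
  · -- U nonempty
    have hUne : U.Nonempty := Finset.nonempty_iff_ne_empty.mpr hUe
    have hprop1 := proper_0n1 hDU hdisj h1D hnD hn hUne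
    have hRe : Rext n D U 0 (n+1) = D := by
      rw [Rext, if_pos hprop1, Rdiag,
        if_neg (fun h => by have := hu2 0 h; omega),
        if_neg (fun h => by have := hu2 (n+1) h; omega)]
      exact hDabF1
    have hsd : (Finset.Icc 1 n \ Rext n D U 0 (n+1)).card = n - D.card := by
      rw [hRe, ← hDU, Finset.union_sdiff_cancel_left hdisj, hUcard]
    have hz1 : zext n D U w zn 0 (n+1) = w (0, n+1) := by
      rw [zext, if_pos hprop1]
    have hq1 : (if IsProper n D U 0 (n+1) then w (0, n+1) - zn else 0) = w (0, n+1) - zn :=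
      if_pos hprop1
    have hiU : (if U = ∅ then (1:ℝ) else 0) = 0 := if_neg hUe
    rw [hsd, hz1, hq1, hiU]
    by_cases hmid : DabF D 1 n = ∅
    · have hq4 : (if IsProper n D U 1 n then w (1, n) - zn else 0) = 0 :=
        if_neg (not_proper_1n hDU hdisj h1D hnD hn hmid)
      have hz4 : zext n D U w zn 1 n = 0 := by
        rw [zext, if_neg (not_proper_1n hDU hdisj h1D hnD hn hmid),
          if_neg (by rintro ⟨h, _, _⟩; exact hUe h),
          if_neg (by rintro (h | h)
                     · exact Finset.disjoint_left.mp hdisj h1D h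
                     · exact Finset.disjoint_left.mp hdisj hnD h)]
      have hi4 : (if DabF D 1 n = ∅ then (1:ℝ) else 0) = 1 := if_pos hmid
      rw [hq4, hz4, hi4]
      ring
    · have hq4 : (if IsProper n D U 1 n then w (1, n) - zn else 0) = w (1, n) - zn :=
        if_pos (proper_1n hDU hdisj h1D hnD hn (Finset.nonempty_iff_ne_empty.mpr hmid))
      have hz4 : zext n D U w zn 1 n = w (1, n) := by
        rw [zext, if_pos (proper_1n hDU hdisj h1D hnD hn (Finset.nonempty_iff_ne_empty.mpr hmid))]
      have hi4 : (if DabF D 1 n = ∅ then (1:ℝ) else 0) = 0 := if_neg hmid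
      rw [hq4, hz4, hi4]
      ring

end AssocPaper
end

section
/- Let n ≥ 3 and let I be a nonempty proper nested subset of [n]. If among the four diagonals δ_1, δ_2, δ_3, δ_4 exactly δ_1 is proper (i.e. D_I = {δ_1}), then I ⊆ D and |I| = 1. -/
open Finset

attribute [local instance] Classical.propDecidable

namespace AssocPaper

/-- for `n ≥ 3` and a nonempty proper nested `I ⊆ [n]`, if among
`δ_1, δ_2, δ_3, δ_4` exactly `δ_1` is proper, then `I ⊆ D` and `|I| = 1`. -/
theorem statement14 (n : ℕ) (D U : Finset ℕ) (hn : 3 ≤ n)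
    (hDU : D ∪ U = Finset.Icc 1 n) (hdisj : Disjoint D U) (h1D : 1 ∈ D) (hnD : n ∈ D)
    (I : Finset ℕ) (hne : I.Nonempty) (hsub : I ⊆ Finset.Icc 1 n)
    (hpropersub : I ≠ Finset.Icc 1 n) (hnested : IsNested n D I)
    (h1 : IsProper n D U (aI D I) (bI n D I))
    (h2 : ¬ IsProper n D U (aI D I) (maxEl I))
    (h3 : ¬ IsProper n D U (minEl I) (bI n D I))
    (h4 : ¬ IsProper n D U (minEl I) (maxEl I)) :
    I ⊆ D ∧ I.card = 1 := by
  classical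
  have hIcc : ∀ i ∈ I, 1 ≤ i ∧ i ≤ n := fun i hi => Finset.mem_Icc.mp (hsub hi)
  -- min and max facts
  have hne' : {i : ℕ | i ∈ I}.Nonempty := ⟨hne.choose, hne.choose_spec⟩
  have hγI : minEl I ∈ I := by simpa [minEl] using Nat.sInf_mem hne'
  have hγle : ∀ i ∈ I, minEl I ≤ i := by
    intro i hi; exact Nat.sInf_le (by simpa using hi)
  obtain ⟨m, hmI, hmeq⟩ := Finset.exists_mem_eq_sup I hne (id : ℕ → ℕ)
  have hΓI : maxEl I ∈ I := by rw [maxEl, hmeq]; exact hmI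
  have hleΓ : ∀ i ∈ I, i ≤ maxEl I := fun i hi => Finset.le_sup (f := id) hi
  -- a facts
  have h0S : 0 ∈ (insert 0 D).filter (fun e => ∀ i ∈ I, e < i) := by
    refine Finset.mem_filter.mpr ⟨Finset.mem_insert_self _ _, fun i hi => ?_⟩
    have := (hIcc i hi).1; omega
  obtain ⟨e, heS, heq⟩ := Finset.exists_mem_eq_sup _ ⟨0, h0S⟩ (id : ℕ → ℕ)
  have haS : aI D I ∈ (insert 0 D).filter (fun e => ∀ i ∈ I, e < i) := by
    rw [aI, heq]; exact heS
  have haD : aI D I ∈ insert 0 D := (Finset.mem_filter.mp haS).1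
  have halt : ∀ i ∈ I, aI D I < i := (Finset.mem_filter.mp haS).2
  -- b facts
  have hbT : bI n D I ∈ {e : ℕ | e ∈ insert (n+1) D ∧ ∀ i ∈ I, i < e} := by
    apply Nat.sInf_mem
    exact ⟨n+1, Finset.mem_insert_self _ _, fun i hi => by have := (hIcc i hi).2; omega⟩
  have hbD : bI n D I ∈ insert (n+1) D := hbT.1
  have hblt : ∀ i ∈ I, i < bI n D I := hbT.2
  have hble : bI n D I ≤ n + 1 :=
    Nat.sInf_le ⟨Finset.mem_insert_self _ _, fun i hi => by have := (hIcc i hi).2; omega⟩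
  -- disjointness facts
  have hDnotU : ∀ d ∈ D, d ∉ U := fun d hd hu => Finset.disjoint_left.mp hdisj hd hu
  have hU1n : ∀ u ∈ U, 1 ≤ u ∧ u ≤ n := fun u hu =>
    Finset.mem_Icc.mp (hDU ▸ Finset.mem_union_right D hu)
  have haU : aI D I ∉ U := by
    intro hu
    rcases Finset.mem_insert.mp haD with h0 | hD
    · have := (hU1n _ hu).1; omega
    · exact hDnotU _ hD hu
  have hbU : bI n D I ∉ U := by
    intro hu
    rcases Finset.mem_insert.mp hbD with h0 | hD
    · have h2n := (hU1n _ hu).2; omega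
    · exact hDnotU _ hD hu
  have hnotDbar : ∀ u ∈ U, u ∉ Dbar n D := by
    intro u hu hmem
    have h1u := (hU1n u hu).1
    have h2u := (hU1n u hu).2
    rcases Finset.mem_insert.mp hmem with h | hmem
    · omega
    rcases Finset.mem_insert.mp hmem with h | hD
    · omega
    · exact hDnotU u hD hu
  -- boundary facts from non-properness
  have haΓ : aI D I < maxEl I := halt _ hΓI
  have hγb : minEl I < bI n D I := hblt _ hγI
  have hΓn : maxEl I ≤ n := (hIcc _ hΓI).2
  have hγ1 : 1 ≤ minEl I := (hIcc _ hγI).1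
  have hγΓ : minEl I ≤ maxEl I := hγle _ hΓI
  have hb2 : IsBoundary n D U (aI D I) (maxEl I) := by
    by_contra hB; exact h2 ⟨haΓ, by omega, hB⟩
  have hb3 : IsBoundary n D U (minEl I) (bI n D I) := by
    by_contra hB; exact h3 ⟨hγb, hble, hB⟩
  -- auxiliary implications
  have ha0 : aI D I = 0 → minEl I = 1 := by
    intro h0
    by_contra hne1
    have h1γ : 1 < minEl I := by omega
    have h1le : (1 : ℕ) ≤ aI D I := by
      rw [aI]
      exact Finset.le_sup (f := id) (Finset.mem_filter.mpr
        ⟨Finset.mem_insert_of_mem h1D, fun i hi => lt_of_lt_of_le h1γ (hγle i hi)⟩)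
    omega
  have hbn : bI n D I = n + 1 → maxEl I = n := by
    intro hb1
    by_contra hnen
    have hΓltn : maxEl I < n := by omega
    have : bI n D I ≤ n := Nat.sInf_le
      ⟨Finset.mem_insert_of_mem hnD, fun i hi => lt_of_le_of_lt (hleΓ i hi) hΓltn⟩
    omega
  -- membership in D or U
  have hΓDU : maxEl I ∈ D ∨ maxEl I ∈ U := Finset.mem_union.mp (hDU ▸ (hsub hΓI : _))
  have hγDU : minEl I ∈ D ∨ minEl I ∈ U := Finset.mem_union.mp (hDU ▸ (hsub hγI : _))
  rcases hΓDU with hΓD | hΓU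
  · rcases hγDU with hγD | hγU
    · -- Case A: γ ∈ D, Γ ∈ D : get ConsecIn Dbar a Γ, force γ = Γ
      have hcons : ConsecIn (Dbar n D) (aI D I) (maxEl I) := by
        rcases hb2 with hc | ⟨hUne, hc⟩ | ⟨hUe, ha', hΓ'⟩
        · exact hc
        · rcases hc with ⟨_, hΓU', _⟩ | ⟨hΓ', _, _⟩ | ⟨_, hΓU', _, _⟩
          · exact absurd hΓU' (hDnotU _ hΓD)
          · omega
          · exact absurd hΓU' (hDnotU _ hΓD)
        · omega
      have hγDbar : minEl I ∈ Dbar n D :=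
        Finset.mem_insert_of_mem (Finset.mem_insert_of_mem hγD)
      have hnot := hcons.2.2.2 _ hγDbar
      have hγeqΓ : minEl I = maxEl I := by
        have haγ := halt _ hγI
        by_contra hneq
        exact hnot ⟨haγ, by omega⟩
      have hIsingle : I = {minEl I} := by
        apply Finset.eq_singleton_iff_unique_mem.mpr
        refine ⟨hγI, fun i hi => ?_⟩
        have := hγle i hi; have := hleΓ i hi; omega
      constructor
      · intro i hi
        rw [hIsingle] at hi
        rw [Finset.mem_singleton.mp hi]; exact hγD
      · rw [hIsingle]; exact Finset.card_singleton _
    · -- Case C: γ ∈ U, Γ ∈ D : get b = n+1, then Γ = n, contradiction from δ4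
      have hbn1 : bI n D I = n + 1 := by
        rcases hb3 with hc | ⟨hUne, hc⟩ | ⟨hUe, ha', hb'⟩
        · exact absurd hc.1 (hnotDbar _ hγU)
        · rcases hc with ⟨hγ0, _, _⟩ | ⟨hb', _, _⟩ | ⟨_, hbU', _, _⟩
          · omega
          · exact hb'
          · exact absurd hbU' hbU
        · omega
      have hΓeqn : maxEl I = n := hbn hbn1
      have hγltΓ : minEl I < maxEl I := by
        have : minEl I ≠ maxEl I := fun h => hDnotU _ hΓD (h ▸ hγU)
        omega
      have hb4 : IsBoundary n D U (minEl I) (maxEl I) := by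
        by_contra hB; exact h4 ⟨hγltΓ, by omega, hB⟩
      rcases hb4 with hc | ⟨hUne, hc⟩ | ⟨hUe, hγ0, _⟩
      · exact absurd hc.1 (hnotDbar _ hγU)
      · rcases hc with ⟨hγ0, _, _⟩ | ⟨hΓ', _, _⟩ | ⟨_, hΓU', _, _⟩
        · omega
        · omega
        · exact absurd hΓU' (hDnotU _ hΓD)
      · omega
  · -- Γ ∈ U : from hb2, a = 0, hence γ = 1 ∈ D
    have ha0' : aI D I = 0 := by
      rcases hb2 with hc | ⟨hUne, hc⟩ | ⟨hUe, ha', hΓ'⟩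
      · exact absurd hc.2.1 (hnotDbar _ hΓU)
      · rcases hc with ⟨ha', _, _⟩ | ⟨hΓ', _, _⟩ | ⟨haU', _, _⟩
        · exact ha'
        · omega
        · exact absurd haU' haU
      · exact absurd (hΓ' ▸ hΓU) (by
          intro h; have := (hU1n _ h).2; omega)
    have hγeq1 : minEl I = 1 := ha0 ha0'
    rcases hγDU with hγD | hγU
    · -- Case B: γ = 1 ∈ D, Γ ∈ U : δ4 gives contradiction
      have hγltΓ : minEl I < maxEl I := by
        have : minEl I ≠ maxEl I := fun h => hDnotU _ hγD (h ▸ hΓU)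
        omega
      have hb4 : IsBoundary n D U (minEl I) (maxEl I) := by
        by_contra hB; exact h4 ⟨hγltΓ, by omega, hB⟩
      rcases hb4 with hc | ⟨hUne, hc⟩ | ⟨hUe, hγ0, _⟩
      · exact absurd hc.2.1 (hnotDbar _ hΓU)
      · rcases hc with ⟨hγ0, _, _⟩ | ⟨hΓ', _, _⟩ | ⟨hγU', _, _⟩
        · omega
        · have := (hU1n _ hΓU).2; omega
        · exact absurd hγU' (hDnotU _ hγD)
      · omega
    · -- Case D: γ = 1 ∈ U, but 1 ∈ D
      exact absurd (hγeq1 ▸ hγU) (hDnotU _ h1D)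


end AssocPaper
end

section
/- Let n ≥ 3 and let I be a nonempty proper nested subset of [n]. If D_I = {δ_2, δ_3} (i.e. exactly δ_2 and δ_3 among the four diagonals are proper), then either (a) I = {u_s} for some 1 ≤ s ≤ m, or (b) I = {u_s, u_{s+1}} for some 1 ≤ s < m, where U = {u_1 < ⋯ < u_m}. -/
open Finset

attribute [local instance] Classical.propDecidable

namespace AssocPaper

/-- for `n ≥ 3` and a nonempty proper nested `I ⊆ [n]`, if among
`δ_1, δ_2, δ_3, δ_4` exactly `δ_2` and `δ_3` are proper, then `I = {u}` for some
`u ∈ U`, or `I = {u, u'}` for consecutive elements `u < u'` of `U`. -/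
theorem statement16 (n : ℕ) (D U : Finset ℕ) (hn : 3 ≤ n)
    (hDU : D ∪ U = Finset.Icc 1 n) (hdisj : Disjoint D U) (h1D : 1 ∈ D) (hnD : n ∈ D)
    (I : Finset ℕ) (hne : I.Nonempty) (hsub : I ⊆ Finset.Icc 1 n)
    (hpropersub : I ≠ Finset.Icc 1 n) (hnested : IsNested n D I)
    (h1 : ¬ IsProper n D U (aI D I) (bI n D I))
    (h2 : IsProper n D U (aI D I) (maxEl I))
    (h3 : IsProper n D U (minEl I) (bI n D I))
    (h4 : ¬ IsProper n D U (minEl I) (maxEl I)) :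
    (∃ u ∈ U, I = {u}) ∨ (∃ u u', ConsecIn U u u' ∧ I = {u, u'}) := by
  classical
  -- basic facts about elements of I
  have hIpos : ∀ i ∈ I, 1 ≤ i := fun i hi => (Finset.mem_Icc.1 (hsub hi)).1
  have hIle : ∀ i ∈ I, i ≤ n := fun i hi => (Finset.mem_Icc.1 (hsub hi)).2
  have hUsub : U ⊆ Finset.Icc 1 n := hDU ▸ Finset.subset_union_right
  -- properties of a = aI D I
  have hfilne : ((insert 0 D).filter fun e => ∀ i ∈ I, e < i).Nonempty :=
    ⟨0, Finset.mem_filter.2 ⟨Finset.mem_insert_self _ _, fun i hi => hIpos i hi⟩⟩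
  obtain ⟨a0, ha0mem, ha0⟩ := Finset.exists_mem_eq_sup _ hfilne id
  have haprop : aI D I ∈ insert 0 D ∧ ∀ i ∈ I, aI D I < i := by
    have h := Finset.mem_filter.1 ha0mem
    have : aI D I = a0 := ha0
    rw [this]; exact ⟨h.1, h.2⟩
  -- properties of b = bI n D I
  have hbset : (n + 1) ∈ {e : ℕ | e ∈ insert (n + 1) D ∧ ∀ i ∈ I, i < e} :=
    ⟨Finset.mem_insert_self _ _, fun i hi => Nat.lt_succ_of_le (hIle i hi)⟩
  have hbprop : bI n D I ∈ insert (n + 1) D ∧ ∀ i ∈ I, i < bI n D I :=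
    Nat.sInf_mem ⟨n + 1, hbset⟩
  have hble : bI n D I ≤ n + 1 := Nat.sInf_le hbset
  -- properties of γ = minEl I and Γ = maxEl I
  have hγI : minEl I ∈ I := Nat.sInf_mem (by obtain ⟨i, hi⟩ := hne; exact ⟨i, hi⟩)
  have hγle : ∀ i ∈ I, minEl I ≤ i := fun i hi => Nat.sInf_le hi
  obtain ⟨M0, hM0mem, hM0⟩ := Finset.exists_mem_eq_sup I hne id
  have hΓI : maxEl I ∈ I := by have : maxEl I = M0 := hM0; rw [this]; exact hM0mem
  have hΓge : ∀ i ∈ I, i ≤ maxEl I := fun i hi => Finset.le_sup (f := id) hi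
  -- 0 ∉ U and n+1 ∉ U and D ∩ U = ∅
  have h0U : (0 : ℕ) ∉ U := fun h => by
    have := Finset.mem_Icc.1 (hUsub h); omega
  have hn1U : (n + 1) ∉ U := fun h => by
    have := Finset.mem_Icc.1 (hUsub h); omega
  have hDnotU : ∀ x ∈ D, x ∉ U := fun x hx hxU =>
    Finset.disjoint_left.1 hdisj hx hxU
  have haU : aI D I ∉ U := by
    rcases Finset.mem_insert.1 haprop.1 with h | h
    · rw [h]; exact h0U
    · exact hDnotU _ h
  have hbU : bI n D I ∉ U := by
    rcases Finset.mem_insert.1 hbprop.1 with h | h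
    · rw [h]; exact hn1U
    · exact hDnotU _ h
  have hab : aI D I < bI n D I :=
    lt_trans (haprop.2 _ hγI) (hbprop.2 _ hγI)
  -- δ1 = {a,b} is a boundary edge
  have hbd1 : IsBoundary n D U (aI D I) (bI n D I) := by
    by_contra h
    exact h1 ⟨hab, hble, h⟩
  -- Step 1 : no element of D lies strictly between a and b, hence I ⊆ U
  have hnoD : ∀ d ∈ D, ¬ (aI D I < d ∧ d < bI n D I) := by
    rcases hbd1 with hc | ⟨hUne, hcase⟩ | ⟨hUe, ha0, hbn1⟩
    · intro d hd hdlt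
      exact hc.2.2.2 d (by simp [Dbar, Finset.mem_insert, hd]) hdlt
    · exfalso
      rcases hcase with ⟨_, hbmem, _⟩ | ⟨_, hamem, _⟩ | hcon
      · exact hbU hbmem
      · exact haU hamem
      · exact haU hcon.1
    · exfalso
      apply hpropersub
      apply Finset.Subset.antisymm hsub
      intro x hx
      have hxD : x ∈ D := by
        have : x ∈ D ∪ U := hDU ▸ hx
        rcases Finset.mem_union.1 this with h | h
        · exact h
        · rw [hUe] at h; exact absurd h (Finset.notMem_empty x)
      have hx' := Finset.mem_Icc.1 hx
      exact hnested.2.2 x hxD (by omega) (by rw [hbn1]; omega)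
  have hIU : ∀ i ∈ I, i ∈ U := by
    intro i hi
    have : i ∈ D ∪ U := hDU ▸ hsub hi
    rcases Finset.mem_union.1 this with h | h
    · exact absurd ⟨haprop.2 i hi, hbprop.2 i hi⟩ (hnoD i h)
    · exact h
  have hγU : minEl I ∈ U := hIU _ hγI
  -- Case split on whether I is a singleton
  by_cases hcase : minEl I = maxEl I
  · -- I = {minEl I}
    left
    refine ⟨minEl I, hγU, ?_⟩
    apply Finset.ext
    intro x
    simp only [Finset.mem_singleton]
    constructor
    · intro hx
      have h1' := hγle x hx
      have h2' := hΓge x hx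
      omega
    · intro hx; rw [hx]; exact hγI
  · have hγΓ : minEl I < maxEl I :=
      lt_of_le_of_ne (hγle _ hΓI) hcase
    have hΓle : maxEl I ≤ n + 1 := by have := hIle _ hΓI; omega
    have hbd4 : IsBoundary n D U (minEl I) (maxEl I) := by
      by_contra h
      exact h4 ⟨hγΓ, hΓle, h⟩
    have hγDbar : minEl I ∉ Dbar n D := by
      intro h
      have h1' := hIpos _ hγI
      have h2' := hIle _ hγI
      rcases Finset.mem_insert.1 h with h | h
      · omega
      rcases Finset.mem_insert.1 h with h | h
      · omega
      · exact hDnotU _ h hγU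
    have hcon : ConsecIn U (minEl I) (maxEl I) := by
      rcases hbd4 with hc | ⟨hUne, hcc⟩ | ⟨hUe, hγ0, _⟩
      · exact absurd hc.1 hγDbar
      · rcases hcc with ⟨hγ0, _⟩ | ⟨hΓn1, _⟩ | hcon
        · exact absurd hγ0 (by have := hIpos _ hγI; omega)
        · exact absurd hΓn1 (by have := hIle _ hΓI; omega)
        · exact hcon
      · exact absurd (hUe ▸ hγU) (Finset.notMem_empty _)
    right
    refine ⟨minEl I, maxEl I, hcon, ?_⟩
    apply Finset.ext
    intro x
    simp only [Finset.mem_insert, Finset.mem_singleton]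
    constructor
    · intro hx
      have h1' := hγle x hx
      have h2' := hΓge x hx
      by_contra hne'
      push_neg at hne'
      exact hcon.2.2.2 x (hIU x hx) ⟨lt_of_le_of_ne h1' (Ne.symm hne'.1), lt_of_le_of_ne h2' hne'.2⟩
    · intro hx
      rcases hx with h | h
      · rw [h]; exact hγI
      · rw [h]; exact hΓI


end AssocPaper
end

section
/- Let n ≥ 3 and let I be a nonempty proper nested subset of [n]. If D_I = {δ_2, δ_3, δ_4} (i.e. exactly δ_2, δ_3 and δ_4 among the four diagonals are proper), then I ⊆ U, there is 1 ≤ r < ℓ such that every element of I lies strictly between the consecutive down elements d_r and d_{r+1}, and, writing min I = u_s and max I = u_t in the enumeration U = {u_1 < ⋯ < u_m}, one has t ≥ s + 2 (equivalently, |{u ∈ U : min I ≤ u ≤ max I}| ≥ 3). -/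
open Finset

attribute [local instance] Classical.propDecidable

namespace AssocPaper

lemma sup_id_mem {S : Finset ℕ} (h : S.Nonempty) : S.sup id ∈ S := by
  have := S.max'_mem h
  rwa [Finset.max', Finset.sup'_eq_sup] at this

/-- for `n ≥ 3` and a nonempty proper nested `I ⊆ [n]`, if among
`δ_1, δ_2, δ_3, δ_4` exactly `δ_2`, `δ_3` and `δ_4` are proper, then `I ⊆ U`,
all elements of `I` lie strictly between some pair of consecutive elements of `D`,
and `|{u ∈ U : min I ≤ u ≤ max I}| ≥ 3` (i.e. `t ≥ s + 2`). -/
theorem statement19 (n : ℕ) (D U : Finset ℕ) (hn : 3 ≤ n)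
    (hDU : D ∪ U = Finset.Icc 1 n) (hdisj : Disjoint D U) (h1D : 1 ∈ D) (hnD : n ∈ D)
    (I : Finset ℕ) (hne : I.Nonempty) (hsub : I ⊆ Finset.Icc 1 n)
    (hpropersub : I ≠ Finset.Icc 1 n) (hnested : IsNested n D I)
    (h1 : ¬ IsProper n D U (aI D I) (bI n D I))
    (h2 : IsProper n D U (aI D I) (maxEl I))
    (h3 : IsProper n D U (minEl I) (bI n D I))
    (h4 : IsProper n D U (minEl I) (maxEl I)) :
    I ⊆ U
    ∧ (∃ d d', ConsecIn D d d' ∧ ∀ i ∈ I, d < i ∧ i < d')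
    ∧ 3 ≤ (U.filter fun u => minEl I ≤ u ∧ u ≤ maxEl I).card := by
  classical
  set a := aI D I with ha
  set b := bI n D I with hb
  set γ := minEl I with hγ
  set Γ := maxEl I with hΓ
  -- basic facts about elements of I
  have hi_bounds : ∀ i ∈ I, 1 ≤ i ∧ i ≤ n := by
    intro i hi
    have := hsub hi
    simpa [Finset.mem_Icc] using this
  -- min and max
  have hγI : γ ∈ I := by
    rw [hγ, minEl]
    exact Nat.sInf_mem (by obtain ⟨x, hx⟩ := hne; exact ⟨x, hx⟩)
  have hγle : ∀ i ∈ I, γ ≤ i := by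
    intro i hi; exact Nat.sInf_le hi
  have hΓI : Γ ∈ I := by
    rw [hΓ, maxEl]; exact sup_id_mem hne
  have hleΓ : ∀ i ∈ I, i ≤ Γ := by
    intro i hi; exact Finset.le_sup (f := id) hi
  have hγΓ : γ < Γ := h4.1
  -- facts about a
  have hSa_ne : (0 : ℕ) ∈ (insert 0 D).filter fun e => ∀ i ∈ I, e < i := by
    refine Finset.mem_filter.mpr ⟨Finset.mem_insert_self _ _, ?_⟩
    intro i hi; exact lt_of_lt_of_le Nat.zero_lt_one (hi_bounds i hi).1
  have haSa : a ∈ (insert 0 D).filter fun e => ∀ i ∈ I, e < i := by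
    rw [ha, aI]; exact sup_id_mem ⟨0, hSa_ne⟩
  have haD : a ∈ insert 0 D := (Finset.mem_filter.mp haSa).1
  have halt : ∀ i ∈ I, a < i := (Finset.mem_filter.mp haSa).2
  have hle_a : ∀ d, d ∈ insert 0 D → (∀ i ∈ I, d < i) → d ≤ a := by
    intro d hd hdlt
    rw [ha, aI]
    exact Finset.le_sup (f := id) (Finset.mem_filter.mpr ⟨hd, hdlt⟩)
  -- facts about b
  have hbS : b ∈ {e : ℕ | e ∈ insert (n + 1) D ∧ ∀ i ∈ I, i < e} := by
    rw [hb, bI]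
    refine Nat.sInf_mem ⟨n + 1, Finset.mem_insert_self _ _, ?_⟩
    intro i hi; exact Nat.lt_succ_of_le (hi_bounds i hi).2
  have hbD : b ∈ insert (n + 1) D := hbS.1
  have hblt : ∀ i ∈ I, i < b := hbS.2
  have hb_le : ∀ e, e ∈ insert (n + 1) D → (∀ i ∈ I, i < e) → b ≤ e := by
    intro e he helt
    rw [hb, bI]
    exact Nat.sInf_le ⟨he, helt⟩
  have hab : a < b := lt_trans (halt γ hγI) (hblt γ hγI)
  have hDsub : D ⊆ Finset.Icc 1 n := hDU ▸ Finset.subset_union_left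
  have hUsub : U ⊆ Finset.Icc 1 n := hDU ▸ Finset.subset_union_right
  have hbn1 : b ≤ n + 1 := by
    rcases Finset.mem_insert.mp hbD with h | h
    · omega
    · have := hDsub h; rw [Finset.mem_Icc] at this; omega
  -- δ₁ is a boundary edge
  have hbd1 : IsBoundary n D U a b := by
    by_contra hc
    exact h1 ⟨hab, hbn1, hc⟩
  -- a ∉ U, b ∉ U
  have haU : a ∉ U := by
    intro haU'
    rcases Finset.mem_insert.mp haD with h | h
    · have := hUsub haU'; rw [Finset.mem_Icc] at this; omega
    · exact (Finset.disjoint_left.mp hdisj h) haU'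
  have hbU : b ∉ U := by
    intro hbU'
    rcases Finset.mem_insert.mp hbD with h | h
    · have := hUsub hbU'; rw [Finset.mem_Icc] at this; omega
    · exact (Finset.disjoint_left.mp hdisj h) hbU'
  -- the boundary edge must be a consecutive pair in D̄
  have hcons : ConsecIn (Dbar n D) a b := by
    rcases hbd1 with h | ⟨_, h | h | h⟩ | ⟨hUe, han, hbn⟩
    · exact h
    · exact absurd h.2.1 hbU
    · exact absurd h.2.1 haU
    · exact absurd h.1 haU
    · -- U = ∅, a = 0, b = n+1 : then I = Icc 1 n
      exfalso
      apply hpropersub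
      apply Finset.Subset.antisymm hsub
      intro d hd
      have hdD : d ∈ D := by
        have : d ∈ D ∪ U := hDU ▸ hd
        rcases Finset.mem_union.mp this with h | h
        · exact h
        · simp [hUe] at h
      have hd' := Finset.mem_Icc.mp hd
      refine hnested.2.2 d hdD ?_ ?_
      · rw [← ha, han]; omega
      · rw [← hb, hbn]; omega
  have hnoD : ∀ d ∈ D, ¬ (a < d ∧ d < b) := by
    intro d hd
    exact hcons.2.2.2 d (by simp [Dbar, hd])
  -- I ⊆ U
  have hIU : I ⊆ U := by
    intro i hi
    have hiDU : i ∈ D ∪ U := hDU ▸ hsub hi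
    rcases Finset.mem_union.mp hiDU with h | h
    · exact absurd ⟨halt i hi, hblt i hi⟩ (hnoD i h)
    · exact h
  -- γ ≥ 2, Γ ≤ n - 1
  have hγ2 : 2 ≤ γ := by
    have h1γ : 1 ≤ γ := (hi_bounds γ hγI).1
    rcases Nat.lt_or_ge γ 2 with h | h
    · exfalso
      have : γ = 1 := by omega
      exact (Finset.disjoint_left.mp hdisj (this ▸ h1D)) (hIU hγI)
    · exact h
  have hΓn : Γ < n := by
    have hΓn' : Γ ≤ n := (hi_bounds Γ hΓI).2
    rcases Nat.lt_or_ge Γ n with h | h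
    · exact h
    · exfalso
      have : Γ = n := by omega
      exact (Finset.disjoint_left.mp hdisj (this ▸ hnD)) (hIU hΓI)
  -- a ∈ D and b ∈ D
  have haD' : a ∈ D := by
    have h1a : 1 ≤ a := by
      refine hle_a 1 (Finset.mem_insert_of_mem h1D) ?_
      intro i hi
      exact lt_of_lt_of_le hγ2 (hγle i hi)
    rcases Finset.mem_insert.mp haD with h | h
    · omega
    · exact h
  have hbD' : b ∈ D := by
    have hbn : b ≤ n := by
      refine hb_le n (Finset.mem_insert_of_mem hnD) ?_
      intro i hi
      exact lt_of_le_of_lt (hleΓ i hi) hΓn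
    rcases Finset.mem_insert.mp hbD with h | h
    · omega
    · exact h
  refine ⟨hIU, ⟨a, b, ⟨haD', hbD', hab, fun z hz => hnoD z hz⟩,
    fun i hi => ⟨halt i hi, hblt i hi⟩⟩, ?_⟩
  -- third part: there is u ∈ U with γ < u < Γ
  have hγU : γ ∈ U := hIU hγI
  have hΓU : Γ ∈ U := hIU hΓI
  obtain ⟨u, huU, huγ, huΓ⟩ : ∃ u ∈ U, γ < u ∧ u < Γ := by
    by_contra hcu
    push_neg at hcu
    apply h4.2.2
    refine Or.inr (Or.inl ⟨⟨γ, hγU⟩, Or.inr (Or.inr ⟨hγU, hΓU, hγΓ, ?_⟩)⟩)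
    intro z hz hzz
    exact absurd hzz.2 (not_lt.mpr (hcu z hz hzz.1))
  have hss : ({γ, u, Γ} : Finset ℕ) ⊆ U.filter fun v => minEl I ≤ v ∧ v ≤ maxEl I := by
    intro x hx
    rw [Finset.mem_insert, Finset.mem_insert, Finset.mem_singleton] at hx
    rcases hx with rfl | rfl | rfl
    · exact Finset.mem_filter.mpr ⟨hγU, le_refl _, le_of_lt hγΓ⟩
    · exact Finset.mem_filter.mpr ⟨huU, le_of_lt huγ, le_of_lt huΓ⟩
    · exact Finset.mem_filter.mpr ⟨hΓU, le_of_lt hγΓ, le_refl _⟩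
  have hcard : ({γ, u, Γ} : Finset ℕ).card = 3 := by
    rw [Finset.card_insert_of_notMem (by simp; omega),
      Finset.card_insert_of_notMem (by simp; omega), Finset.card_singleton]
  calc 3 = ({γ, u, Γ} : Finset ℕ).card := hcard.symm
    _ ≤ _ := Finset.card_le_card hss

end AssocPaper
end
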